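/- arXiv:2603.11999 — 10 statements merged into one kernel-verified Lean document; each statement's English description precedes it below -/
import Mathlib

section
/- Let H be a Hilbert space, η ∈ L(H) a bounded operator with Re η ≥ 0 (i.e., Re⟨ηx, x⟩ ≥ 0 for all x), and A : dom(A) ⊆ H → H skew-selfadjoint. Then B := -(η + A) is m-dissipative, i.e., B is dissipative and ran(1 - B) = H. -/
/-- If `η` is a bounded operator with `Re ⟪η x, x⟫ ≥ 0` and `A` is a
densely defined skew-selfadjoint operator (`A† = -A`), then `B := -(η + A)`
(with domain `dom A`) is m-dissipative: `B` is dissipative and `ran (1 - B) = H`. -/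
theorem stmt0 {H : Type*} [NormedAddCommGroup H] [InnerProductSpace ℂ H] [CompleteSpace H]
    (η : H →L[ℂ] H) (hη : ∀ x : H, 0 ≤ (inner ℂ (η x) x : ℂ).re)
    (A : H →ₗ.[ℂ] H) (hdense : Dense (A.domain : Set H))
    (hskew : A.adjoint = -A) :
    (∀ x : A.domain, (inner ℂ (-(η ↑x + A x)) (x : H) : ℂ).re ≤ 0) ∧
      ∀ y : H, ∃ x : A.domain, (x : H) - (-(η ↑x + A x)) = y := by
  obtain ⟨hdom, hfun⟩ := LinearPMap.ext_iff.mp hskew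
  -- formal adjoint property, rewritten with skewness
  have hFA := A.adjoint_isFormalAdjoint hdense
  have skew : ∀ v x : A.domain, (inner ℂ (A v) (x : H) : ℂ) = -(inner ℂ (v : H) (A x) : ℂ) := by
    intro v x
    have h1 : A.adjoint ⟨(v : H), hdom.symm ▸ v.2⟩ = -(A v) := by
      rw [hfun (x := (v : H)) (hf := hdom.symm ▸ v.2) (hg := v.2), LinearPMap.neg_apply]; rfl
    have h2 := hFA ⟨(v : H), hdom.symm ▸ v.2⟩ x
    rw [h1, inner_neg_left] at h2
    exact neg_eq_iff_eq_neg.mp h2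
  -- real part of ⟪A x, x⟫ vanishes
  have reA : ∀ x : A.domain, (inner ℂ (A x) (x : H) : ℂ).re = 0 := by
    intro x
    have h := congrArg Complex.re (skew x x)
    rw [Complex.neg_re] at h
    have h2 : (inner ℂ ((x : H)) (A x) : ℂ).re = (inner ℂ (A x) ((x : H)) : ℂ).re := by
      rw [← RCLike.re_to_complex, ← RCLike.re_to_complex]; exact inner_re_symm _ _
    linarith [h, h2]
  constructor
  · intro x
    rw [inner_neg_left, inner_add_left, Complex.neg_re, Complex.add_re]
    have := hη (x : H)
    rw [reA x]
    linarith
  -- the range map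
  set T : A.domain →ₗ[ℂ] H :=
    A.domain.subtype + η.toLinearMap.comp A.domain.subtype + A.toFun with hTdef
  have hTapp : ∀ x : A.domain, T x = (x : H) + η (x : H) + A x := fun x => rfl
  -- coercivity
  have hre : ∀ x : A.domain, ‖(x : H)‖ ^ 2 ≤ (inner ℂ (T x) (x : H) : ℂ).re := by
    intro x
    rw [hTapp, inner_add_left, inner_add_left, Complex.add_re, Complex.add_re, reA x]
    have h1 : (inner ℂ ((x : H)) ((x : H)) : ℂ).re = ‖(x : H)‖ ^ 2 := by
      rw [← RCLike.re_to_complex]; exact inner_self_eq_norm_sq _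
    have := hη (x : H)
    linarith
  have hnorm : ∀ x : A.domain, ‖(x : H)‖ ≤ ‖T x‖ := by
    intro x
    rcases eq_or_ne ((x : H)) 0 with hx | hx
    · simp [hx]
    have hxpos : 0 < ‖(x : H)‖ := norm_pos_iff.mpr hx
    have h1 : ‖(x : H)‖ ^ 2 ≤ ‖T x‖ * ‖(x : H)‖ :=
      le_trans (hre x) (le_trans (Complex.re_le_norm _)
        (norm_inner_le_norm _ _))
    nlinarith
  -- closedness of A
  have hclosed : ∀ (x z : H) (u : ℕ → A.domain),
      Filter.Tendsto (fun n => ((u n : H))) Filter.atTop (nhds x) →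
      Filter.Tendsto (fun n => A (u n)) Filter.atTop (nhds z) →
      ∃ hx : x ∈ A.domain, A ⟨x, hx⟩ = z := by
    intro x z u hux huz
    have key : ∀ v : A.domain, (inner ℂ (-z) ((v : H)) : ℂ) = inner ℂ x (A v) := by
      intro v
      have hlim1 : Filter.Tendsto (fun n => (inner ℂ (A v) ((u n : H)) : ℂ))
          Filter.atTop (nhds (inner ℂ (A v) x)) :=
        (Filter.Tendsto.inner tendsto_const_nhds hux)
      have hlim2 : Filter.Tendsto (fun n => -(inner ℂ ((v : H)) (A (u n)) : ℂ))
          Filter.atTop (nhds (-(inner ℂ ((v : H)) z))) :=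
        (Filter.Tendsto.inner tendsto_const_nhds huz).neg
      have heq : (fun n => (inner ℂ (A v) ((u n : H)) : ℂ))
          = fun n => -(inner ℂ ((v : H)) (A (u n)) : ℂ) := funext fun n => skew v (u n)
      have h3 : (inner ℂ (A v) x : ℂ) = -(inner ℂ ((v : H)) z : ℂ) :=
        tendsto_nhds_unique (heq ▸ hlim1) hlim2
      calc (inner ℂ (-z) ((v : H)) : ℂ) = -(inner ℂ z ((v : H)) : ℂ) := by rw [inner_neg_left]
        _ = -(starRingEnd ℂ) (inner ℂ ((v : H)) z) := by rw [inner_conj_symm]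
        _ = (starRingEnd ℂ) (-(inner ℂ ((v : H)) z)) := by rw [map_neg]
        _ = (starRingEnd ℂ) (inner ℂ (A v) x) := by rw [h3]
        _ = inner ℂ x (A v) := inner_conj_symm _ _
    have hmem : x ∈ A.adjoint.domain :=
      LinearPMap.mem_adjoint_domain_of_exists _ ⟨-z, key⟩
    have hmem' : x ∈ A.domain := hdom ▸ hmem
    refine ⟨hmem', ?_⟩
    have h4 : A.adjoint ⟨x, hmem⟩ = -z :=
      LinearPMap.adjoint_apply_eq hdense ⟨x, hmem⟩ key
    have h5 : A.adjoint ⟨x, hmem⟩ = -(A ⟨x, hmem'⟩) := by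
      rw [hfun (x := x) (hf := hmem) (hg := hmem'), LinearPMap.neg_apply]
    rw [h5] at h4
    exact neg_injective h4
  -- the range is closed
  have hSclosed : IsClosed ((LinearMap.range T : Submodule ℂ H) : Set H) := by
    rw [← isSeqClosed_iff_isClosed]
    intro f y hf hfy
    choose x hx using fun n => (hf n : f n ∈ LinearMap.range T)
    have hcf : CauchySeq f := hfy.cauchySeq
    have hcx : CauchySeq fun n => ((x n : H)) := by
      rw [Metric.cauchySeq_iff] at hcf ⊢
      intro ε hε
      obtain ⟨N, hN⟩ := hcf ε hε
      refine ⟨N, fun m hm n hn => lt_of_le_of_lt ?_ (hN m hm n hn)⟩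
      have := hnorm (x m - x n)
      rw [map_sub, hx m, hx n] at this
      simpa [dist_eq_norm] using this
    obtain ⟨xl, hxl⟩ := cauchySeq_tendsto_of_complete hcx
    have hηx : Filter.Tendsto (fun n => η ((x n : H))) Filter.atTop (nhds (η xl)) :=
      (η.continuous.tendsto _).comp hxl
    have hAx : Filter.Tendsto (fun n => A (x n)) Filter.atTop (nhds (y - xl - η xl)) := by
      have : (fun n => A (x n)) = fun n => f n - (x n : H) - η ((x n : H)) := by
        funext n
        have := hx n
        rw [hTapp] at this
        rw [← this]; abel
      rw [this]
      exact (hfy.sub hxl).sub hηx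
    obtain ⟨hmem, hval⟩ := hclosed xl (y - xl - η xl) x hxl hAx
    refine ⟨⟨xl, hmem⟩, ?_⟩
    rw [hTapp, hval]
    abel
  -- orthogonal complement of the range is trivial
  have horth : (LinearMap.range T)ᗮ = ⊥ := by
    rw [Submodule.eq_bot_iff]
    intro y hy
    rw [Submodule.mem_orthogonal] at hy
    have hy' : ∀ x : A.domain, (inner ℂ ((x : H)) y : ℂ) + inner ℂ (η (x : H)) y + inner ℂ (A x) y = 0 := by
      intro x
      have := hy (T x) (LinearMap.mem_range_self T x)
      rw [hTapp, inner_add_left, inner_add_left] at this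
      exact this
    set w : H := -(y + (ContinuousLinearMap.adjoint η) y) with hw
    have key : ∀ x : A.domain, (inner ℂ w ((x : H)) : ℂ) = inner ℂ y (A x) := by
      intro x
      have h1 := hy' x
      have h2 : (inner ℂ (A x) y : ℂ) = -(inner ℂ ((x : H)) y + inner ℂ (η (x : H)) y) := by
        rw [neg_add]; linear_combination h1
      calc (inner ℂ w ((x : H)) : ℂ)
          = -(inner ℂ y ((x : H)) + inner ℂ ((ContinuousLinearMap.adjoint η) y) ((x : H))) := by
            rw [hw, inner_neg_left, inner_add_left]
        _ = -(inner ℂ y ((x : H)) + inner ℂ y (η ((x : H)))) := by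
            rw [ContinuousLinearMap.adjoint_inner_left]
        _ = (starRingEnd ℂ) (-(inner ℂ ((x : H)) y + inner ℂ (η ((x : H))) y)) := by
            rw [map_neg, map_add, inner_conj_symm, inner_conj_symm]
        _ = (starRingEnd ℂ) (inner ℂ (A x) y) := by rw [h2]
        _ = inner ℂ y (A x) := inner_conj_symm _ _
    have hmem : y ∈ A.adjoint.domain :=
      LinearPMap.mem_adjoint_domain_of_exists _ ⟨w, key⟩
    have hmem' : y ∈ A.domain := hdom ▸ hmem
    have h4 : A.adjoint ⟨y, hmem⟩ = w :=
      LinearPMap.adjoint_apply_eq hdense ⟨y, hmem⟩ key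
    have h5 : A.adjoint ⟨y, hmem⟩ = -(A ⟨y, hmem'⟩) := by
      rw [hfun (x := y) (hf := hmem) (hg := hmem'), LinearPMap.neg_apply]
    have h6 : A ⟨y, hmem'⟩ = y + (ContinuousLinearMap.adjoint η) y := by
      rw [h5] at h4
      rw [hw] at h4
      exact neg_injective h4
    have h7 := reA ⟨y, hmem'⟩
    rw [h6, inner_add_left, Complex.add_re] at h7
    have h8 : (inner ℂ y y : ℂ).re = ‖y‖ ^ 2 := by
      rw [← RCLike.re_to_complex]; exact inner_self_eq_norm_sq _
    have h9 : 0 ≤ (inner ℂ ((ContinuousLinearMap.adjoint η) y) y : ℂ).re := by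
      have h10 : (inner ℂ ((ContinuousLinearMap.adjoint η) y) y : ℂ).re
          = (inner ℂ (η y) y : ℂ).re := by
        rw [← RCLike.re_to_complex, ← RCLike.re_to_complex,
          ContinuousLinearMap.adjoint_inner_left]
        exact inner_re_symm _ _
      rw [h10]; exact hη y
    have hyn : ‖y‖ ^ 2 ≤ 0 := by linarith
    have : ‖y‖ = 0 := by nlinarith [norm_nonneg y]
    exact norm_eq_zero.mp this
  -- conclude surjectivity
  haveI : CompleteSpace (LinearMap.range T) := hSclosed.completeSpace_coe
  have htop : LinearMap.range T = ⊤ := Submodule.orthogonal_eq_bot_iff.mp horth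
  intro y
  have hy : y ∈ LinearMap.range T := htop ▸ Submodule.mem_top
  obtain ⟨x, hxy⟩ := hy
  refine ⟨x, ?_⟩
  rw [hTapp] at hxy
  rw [← hxy]; abel
end

section
/- Let H₀, H₁ be Hilbert spaces, γ ∈ L(H₀) a bounded operator with Re γ ≥ 0, and C : dom(C) ⊆ H₀ → H₁ densely defined and closed. Then the block operator B := -[[γ, 0],[0, 0]] - [[0, -C*],[C, 0]] with domain dom(C) × dom(C*) on H₀ × H₁ is m-dissipative. -/
open scoped ComplexConjugate

set_option maxHeartbeats 1000000

/-- For `γ` bounded with `Re γ ≥ 0` and `C` densely defined and closed, the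
block operator `B = -[[γ,0],[0,0]] - [[0,-C*],[C,0]]`, sending
`(u, v) ∈ dom C × dom C*` to `(-γ u + C* v, -C u)`, is m-dissipative on `H₀ × H₁`:
dissipative (w.r.t. the product inner product
`⟪(a,b),(c,d)⟫ = ⟪a,c⟫ + ⟪b,d⟫`) and `1 - B` is surjective. -/
theorem stmt1 {H₀ H₁ : Type*} [NormedAddCommGroup H₀] [InnerProductSpace ℂ H₀] [CompleteSpace H₀]
    [NormedAddCommGroup H₁] [InnerProductSpace ℂ H₁] [CompleteSpace H₁]
    (γ : H₀ →L[ℂ] H₀) (hγ : ∀ x : H₀, 0 ≤ (inner ℂ (γ x) x : ℂ).re)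
    (C : H₀ →ₗ.[ℂ] H₁) (hdense : Dense (C.domain : Set H₀)) (hclosed : C.IsClosed) :
    (∀ (u : C.domain) (v : C.adjoint.domain),
        ((inner ℂ (-(γ ↑u) + C.adjoint v) (↑u : H₀) : ℂ) + (inner ℂ (-(C u)) (↑v : H₁) : ℂ)).re ≤ 0) ∧
      ∀ f : H₀, ∀ g : H₁, ∃ (u : C.domain) (v : C.adjoint.domain),
        (↑u : H₀) - (-(γ ↑u) + C.adjoint v) = f ∧ (↑v : H₁) - (-(C u)) = g := by
  have hadj := LinearPMap.adjoint_isFormalAdjoint hdense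
  constructor
  · intro u v
    have h1 : (inner ℂ (C.adjoint v) ((u : H₀)) : ℂ) = inner ℂ (v : H₁) (C u) := hadj v u
    rw [inner_add_left, inner_neg_left, h1, inner_neg_left]
    have h2 : ((inner ℂ (v : H₁) (C u) : ℂ)).re = ((inner ℂ (C u) (v : H₁) : ℂ)).re := by
      rw [← inner_conj_symm (C u) (v : H₁)]
      exact Complex.conj_re _
    have h3 := hγ (u : H₀)
    simp only [Complex.add_re, Complex.neg_re]
    linarith
  · intro f g
    classical
    set e := WithLp.linearEquiv 2 ℂ (H₀ × H₁) with he
    set G : Submodule ℂ (WithLp 2 (H₀ × H₁)) := C.graph.comap e.toLinearMap with hG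
    have hGc : IsClosed (G : Set (WithLp 2 (H₀ × H₁))) := by
      have hset : (G : Set (WithLp 2 (H₀ × H₁))) =
          (WithLp.prodContinuousLinearEquiv 2 ℂ H₀ H₁) ⁻¹' (C.graph : Set (H₀ × H₁)) := rfl
      rw [hset]
      exact hclosed.preimage (WithLp.prodContinuousLinearEquiv 2 ℂ H₀ H₁).continuous
    haveI : CompleteSpace G := hGc.completeSpace_coe
    set M : WithLp 2 (H₀ × H₁) →L[ℂ] WithLp 2 (H₀ × H₁) :=
      ((WithLp.prodContinuousLinearEquiv 2 ℂ H₀ H₁).symm.toContinuousLinearMap).comp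
        (((γ.comp (ContinuousLinearMap.fst ℂ H₀ H₁)).prod 0).comp
          (WithLp.prodContinuousLinearEquiv 2 ℂ H₀ H₁).toContinuousLinearMap) with hM
    have hMinner : ∀ (x y : WithLp 2 (H₀ × H₁)),
        (inner ℂ (M x) y : ℂ) = inner ℂ (γ x.fst) y.fst := by
      intro x y
      simp only [WithLp.prod_inner_apply, WithLp.ofLp_fst, WithLp.ofLp_snd]
      have h1 : (M x).fst = γ x.fst := rfl
      have h2 : (M x).snd = (0 : H₁) := rfl
      rw [h1, h2, inner_zero_left, add_zero]
    set S : G →L[ℂ] G := (G.orthogonalProjection).comp (M.comp G.subtypeL) with hS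
    set T : G →L[ℂ] G := ContinuousLinearMap.id ℂ G + S with hT
    have hTinner : ∀ p q : G, (inner ℂ (T p) q : ℂ) =
        inner ℂ (p : WithLp 2 (H₀ × H₁)) (q : WithLp 2 (H₀ × H₁)) +
          inner ℂ (γ ((p : WithLp 2 (H₀ × H₁)).fst)) ((q : WithLp 2 (H₀ × H₁)).fst) := by
      intro p q
      have h0 : T p = p + S p := rfl
      rw [h0, inner_add_left]
      congr 1
      have h1 : S p = G.orthogonalProjection (M (p : WithLp 2 (H₀ × H₁))) := rfl
      rw [h1, Submodule.inner_orthogonalProjection_eq_of_mem_right]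
      exact hMinner _ _
    have hcoer : ∀ p : G, ‖p‖ ^ 2 ≤ ((inner ℂ (T p) p : ℂ)).re := by
      intro p
      rw [hTinner, Complex.add_re]
      have h1 : ((inner ℂ (p : WithLp 2 (H₀ × H₁)) (p : WithLp 2 (H₀ × H₁)) : ℂ)).re = ‖p‖ ^ 2 := by
        have := inner_self_eq_norm_sq (𝕜 := ℂ) ((p : WithLp 2 (H₀ × H₁)))
        simpa using this
      have h2 := hγ ((p : WithLp 2 (H₀ × H₁)).fst)
      linarith
    have hnorm : ∀ p : G, ‖p‖ ≤ ‖T p‖ := by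
      intro p
      rcases eq_or_ne p 0 with h | h
      · simp [h]
      have hp : 0 < ‖p‖ := norm_pos_iff.mpr h
      have h1 := hcoer p
      have h2 : ((inner ℂ (T p) p : ℂ)).re ≤ ‖T p‖ * ‖p‖ := by
        calc ((inner ℂ (T p) p : ℂ)).re ≤ ‖(inner ℂ (T p) p : ℂ)‖ := Complex.re_le_norm _
          _ ≤ ‖T p‖ * ‖p‖ := by simpa using norm_inner_le_norm (𝕜 := ℂ) (T p) p
      nlinarith
    have hanti : AntilipschitzWith 1 T :=
      T.antilipschitz_of_bound (by simpa using hnorm)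
    have hrange_closed : IsClosed (Set.range T) := hanti.isClosed_range T.uniformContinuous
    have hRclosed : IsClosed ((LinearMap.range (T : G →ₗ[ℂ] G) : Submodule ℂ G) : Set G) := by
      rw [LinearMap.coe_range]
      exact hrange_closed
    haveI : CompleteSpace (LinearMap.range (T : G →ₗ[ℂ] G)) := hRclosed.completeSpace_coe
    have htop : LinearMap.range (T : G →ₗ[ℂ] G) = ⊤ := by
      rw [← Submodule.orthogonal_eq_bot_iff, Submodule.eq_bot_iff]
      intro q hq
      have h0 : (inner ℂ (T q) q : ℂ) = 0 :=
        (Submodule.mem_orthogonal _ q).mp hq (T q) (LinearMap.mem_range_self _ q)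
      have h1 := hcoer q
      rw [h0] at h1
      simp only [Complex.zero_re] at h1
      have h2 : ‖q‖ = 0 := by nlinarith [norm_nonneg q]
      exact norm_eq_zero.mp h2
    set fg : WithLp 2 (H₀ × H₁) := (WithLp.equiv 2 (H₀ × H₁)).symm (f, g) with hfg
    obtain ⟨p, hp⟩ : ∃ p : G, T p = G.orthogonalProjection fg :=
      LinearMap.mem_range.mp (htop ▸ Submodule.mem_top)
    have hpG : (((p : WithLp 2 (H₀ × H₁)).fst, (p : WithLp 2 (H₀ × H₁)).snd) : H₀ × H₁)
        ∈ C.graph := p.2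
    rw [LinearPMap.mem_graph_iff] at hpG
    obtain ⟨u, hu1, hu2⟩ := hpG
    have hkey : ∀ x : C.domain,
        (inner ℂ (g - C u) (C x) : ℂ) = inner ℂ ((u : H₀) + γ (u : H₀) - f) (x : H₀) := by
      intro x
      set qw : WithLp 2 (H₀ × H₁) := (WithLp.equiv 2 (H₀ × H₁)).symm ((x : H₀), C x) with hqw
      have hqG : qw ∈ G := C.mem_graph x
      have h1 : (inner ℂ (T p) (⟨qw, hqG⟩ : G) : ℂ) =
          inner ℂ ((G.orthogonalProjection) fg) (⟨qw, hqG⟩ : G) := by rw [hp]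
      rw [hTinner, Submodule.inner_orthogonalProjection_eq_of_mem_right] at h1
      have h2 : (inner ℂ (p : WithLp 2 (H₀ × H₁)) ((⟨qw, hqG⟩ : G) : WithLp 2 (H₀ × H₁)) : ℂ) =
          inner ℂ ((p : WithLp 2 (H₀ × H₁)).fst) (x : H₀) +
            inner ℂ ((p : WithLp 2 (H₀ × H₁)).snd) (C x) := by
        rw [WithLp.prod_inner_apply]; rfl
      have h3 : (inner ℂ fg ((⟨qw, hqG⟩ : G) : WithLp 2 (H₀ × H₁)) : ℂ) =
          inner ℂ f (x : H₀) + inner ℂ g (C x) := by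
        rw [WithLp.prod_inner_apply]; rfl
      have hq1 : ((⟨qw, hqG⟩ : G) : WithLp 2 (H₀ × H₁)).fst = (x : H₀) := rfl
      rw [h2, h3, hq1] at h1
      dsimp only at hu1 hu2
      rw [← hu1, ← hu2] at h1
      rw [inner_sub_left, inner_sub_left, inner_add_left]
      linear_combination -h1
    have hvmem : (g - C u) ∈ C.adjoint.domain :=
      LinearPMap.mem_adjoint_domain_of_exists _
        ⟨(u : H₀) + γ (u : H₀) - f, fun x => (hkey x).symm⟩
    refine ⟨u, ⟨g - C u, hvmem⟩, ?_, ?_⟩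
    · have hCv : C.adjoint ⟨g - C u, hvmem⟩ = (u : H₀) + γ (u : H₀) - f :=
        LinearPMap.adjoint_apply_eq hdense _ (fun x => (hkey x).symm)
      rw [hCv]; abel
    · show (g - C u) - (-(C u)) = g
      abel
end

section
/- Let H₀, H₁ be Hilbert spaces and let η ∈ L(H₀ × H₁) be a bounded operator with block decomposition η = [[η₀₀, η₀₁],[η₁₀, η₁₁]] satisfying Re η ≥ c for some c > 0. Then Re η₁₁ ≥ c, in particular η₁₁ is invertible, and the Schur complement satisfies Re(η₀₀ - η₀₁ η₁₁⁻¹ η₁₀) ≥ c. -/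
/-- if a bounded block operator `η = [[η₀₀, η₀₁],[η₁₀, η₁₁]]` on `H₀ × H₁`
satisfies `Re ⟪η x, x⟫ ≥ c ‖x‖²` (with the product inner product) for some `c > 0`, then
`Re η₁₁ ≥ c`, `η₁₁` is invertible, and the Schur complement satisfies
`Re (η₀₀ - η₀₁ η₁₁⁻¹ η₁₀) ≥ c`. -/
theorem stmt3 {H₀ H₁ : Type*} [NormedAddCommGroup H₀] [InnerProductSpace ℂ H₀] [CompleteSpace H₀]
    [NormedAddCommGroup H₁] [InnerProductSpace ℂ H₁] [CompleteSpace H₁]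
    (η₀₀ : H₀ →L[ℂ] H₀) (η₀₁ : H₁ →L[ℂ] H₀) (η₁₀ : H₀ →L[ℂ] H₁) (η₁₁ : H₁ →L[ℂ] H₁)
    (c : ℝ) (hc : 0 < c)
    (hη : ∀ (u : H₀) (v : H₁),
      c * (‖u‖ ^ 2 + ‖v‖ ^ 2) ≤
        ((inner ℂ (η₀₀ u + η₀₁ v) u : ℂ) + (inner ℂ (η₁₀ u + η₁₁ v) v : ℂ)).re) :
    (∀ v : H₁, c * ‖v‖ ^ 2 ≤ (inner ℂ (η₁₁ v) v : ℂ).re) ∧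
      ∃ inv : H₁ →L[ℂ] H₁, η₁₁.comp inv = ContinuousLinearMap.id ℂ H₁ ∧
        inv.comp η₁₁ = ContinuousLinearMap.id ℂ H₁ ∧
        ∀ u : H₀, c * ‖u‖ ^ 2 ≤ (inner ℂ ((η₀₀ - η₀₁.comp (inv.comp η₁₀)) u) u : ℂ).re := by
  have h11 : ∀ v : H₁, c * ‖v‖ ^ 2 ≤ (inner ℂ (η₁₁ v) v : ℂ).re := by
    intro v
    have := hη 0 v
    simpa using this
  -- lower bound on norm
  have hbound : ∀ v : H₁, ‖v‖ ≤ c⁻¹ * ‖η₁₁ v‖ := by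
    intro v
    rcases eq_or_ne v 0 with rfl | hv
    · simp
    have hvpos : 0 < ‖v‖ := norm_pos_iff.mpr hv
    have h1 : c * ‖v‖ ^ 2 ≤ ‖η₁₁ v‖ * ‖v‖ := by
      calc c * ‖v‖ ^ 2 ≤ (inner ℂ (η₁₁ v) v : ℂ).re := h11 v
        _ ≤ ‖(inner ℂ (η₁₁ v) v : ℂ)‖ := Complex.re_le_norm _
        _ = ‖(inner ℂ (η₁₁ v) v : ℂ)‖ := rfl
        _ ≤ ‖η₁₁ v‖ * ‖v‖ := norm_inner_le_norm _ _
    have h2 : c * ‖v‖ ≤ ‖η₁₁ v‖ := by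
      have := (mul_le_mul_iff_of_pos_right hvpos).mp (by nlinarith : c * ‖v‖ * ‖v‖ ≤ ‖η₁₁ v‖ * ‖v‖)
      exact this
    calc ‖v‖ = c⁻¹ * (c * ‖v‖) := by field_simp
      _ ≤ c⁻¹ * ‖η₁₁ v‖ := by gcongr
  have hker : LinearMap.ker (η₁₁ : H₁ →ₗ[ℂ] H₁) = ⊥ := by
    rw [LinearMap.ker_eq_bot']
    intro v hv
    replace hv : η₁₁ v = 0 := hv
    by_contra h0
    have := h11 v
    rw [hv] at this
    simp only [inner_zero_left, Complex.zero_re] at this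
    have := mul_pos hc (pow_pos (norm_pos_iff.mpr h0) 2)
    linarith
  have hclosed : IsClosed (Set.range η₁₁) := by
    have hal : AntilipschitzWith ⟨c⁻¹, by positivity⟩ η₁₁ :=
      ContinuousLinearMap.antilipschitz_of_bound η₁₁ hbound
    exact hal.isClosed_range η₁₁.uniformContinuous
  have hcomp : CompleteSpace (LinearMap.range (η₁₁ : H₁ →ₗ[ℂ] H₁)) := by
    have : IsClosed (LinearMap.range (η₁₁ : H₁ →ₗ[ℂ] H₁) : Set H₁) := by
      simpa [LinearMap.coe_range] using hclosed
    exact this.completeSpace_coe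
  have hrange : LinearMap.range (η₁₁ : H₁ →ₗ[ℂ] H₁) = ⊤ := by
    rw [← Submodule.orthogonal_eq_bot_iff]
    rw [Submodule.eq_bot_iff]
    intro w hw
    have h0 : (inner ℂ (η₁₁ w) w : ℂ) = 0 := hw (η₁₁ w) ⟨w, rfl⟩
    have := h11 w
    rw [h0] at this
    simp only [Complex.zero_re] at this
    by_contra hne
    have := mul_pos hc (pow_pos (norm_pos_iff.mpr hne) 2)
    linarith
  let e := ContinuousLinearEquiv.ofBijective η₁₁ hker hrange
  refine ⟨h11, e.symm.toContinuousLinearMap, ?_, ?_, ?_⟩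
  · ext x; simp [e]
  · ext x; simp [e]
  · intro u
    set v : H₁ := -(e.symm (η₁₀ u)) with hv
    have hzero : η₁₀ u + η₁₁ v = 0 := by
      simp [hv, e]
    have key := hη u v
    rw [hzero] at key
    simp only [inner_zero_left, add_zero] at key
    have : (inner ℂ (η₀₀ u + η₀₁ v) u : ℂ) =
        (inner ℂ ((η₀₀ - η₀₁.comp ((e.symm : H₁ →L[ℂ] H₁).comp η₁₀)) u) u : ℂ) := by
      congr 1
      simp [hv, sub_eq_add_neg]
    rw [this] at key
    nlinarith [sq_nonneg ‖v‖]
end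

section
/- Let H₀ be a Hilbert space, N ≤ H₀ a closed subspace with orthogonal complement M, with embeddings ι : M → H₀ and κ : N → H₀. Let γ ∈ L(H₀) with Re γ ≥ c for some c > 0, and let z ∈ ℂ with Re z > -c. Then z + κ*γκ is invertible on N and Re(ι*γι - ι*γκ (z + κ*γκ)⁻¹ κ*γι) ≥ min{Re z + c, c}. -/
set_option maxHeartbeats 1000000


/-- Let `N ≤ H₀` be a closed subspace with orthogonal complement `M = Nᗮ`,
`ι : M → H₀`, `κ : N → H₀` the embeddings. The compressed operators
`ι*γι, ι*γκ, κ*γι, κ*γκ` are characterized by `⟪ι*γκ x, y⟫ = ⟪γ x, y⟫` etc. If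
`Re γ ≥ c > 0` and `Re z > -c` then `z + κ*γκ` is invertible on `N` and the Schur
complement `ι*γι - ι*γκ (z + κ*γκ)⁻¹ κ*γι` satisfies `Re ≥ min (Re z + c) c` on `M`. -/
theorem stmt4 {H₀ : Type*} [NormedAddCommGroup H₀] [InnerProductSpace ℂ H₀] [CompleteSpace H₀]
    (N : Submodule ℂ H₀) (hN : IsClosed (N : Set H₀))
    (γ : H₀ →L[ℂ] H₀) (c : ℝ) (hc : 0 < c)
    (hγ : ∀ x : H₀, c * ‖x‖ ^ 2 ≤ (inner ℂ (γ x) x : ℂ).re)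
    (z : ℂ) (hz : -c < z.re)
    -- the four compressions of γ with respect to the decomposition H₀ = M ⊕ N, M := Nᗮ
    (G_MM : ↥Nᗮ →L[ℂ] ↥Nᗮ) (G_NM : ↥N →L[ℂ] ↥Nᗮ) (G_MN : ↥Nᗮ →L[ℂ] ↥N) (G_NN : ↥N →L[ℂ] ↥N)
    (hMM : ∀ (x y : ↥Nᗮ), (inner ℂ (G_MM x) y : ℂ) = inner ℂ (γ ↑x) (↑y : H₀))
    (hNM : ∀ (x : ↥N) (y : ↥Nᗮ), (inner ℂ (G_NM x) y : ℂ) = inner ℂ (γ ↑x) (↑y : H₀))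
    (hMN : ∀ (x : ↥Nᗮ) (y : ↥N), (inner ℂ (G_MN x) y : ℂ) = inner ℂ (γ ↑x) (↑y : H₀))
    (hNN : ∀ (x y : ↥N), (inner ℂ (G_NN x) y : ℂ) = inner ℂ (γ ↑x) (↑y : H₀)) :
    ∃ inv : ↥N →L[ℂ] ↥N,
      (z • ContinuousLinearMap.id ℂ ↥N + G_NN).comp inv = ContinuousLinearMap.id ℂ ↥N ∧
      inv.comp (z • ContinuousLinearMap.id ℂ ↥N + G_NN) = ContinuousLinearMap.id ℂ ↥N ∧
      ∀ u : ↥Nᗮ, min (z.re + c) c * ‖u‖ ^ 2 ≤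
        (inner ℂ ((G_MM - G_NM.comp (inv.comp G_MN)) u) u : ℂ).re := by
  haveI : CompleteSpace N := hN.completeSpace_coe
  set T : ↥N →L[ℂ] ↥N := z • ContinuousLinearMap.id ℂ ↥N + G_NN with hTdef
  have hm : 0 < z.re + c := by linarith
  have hTinner : ∀ x : ↥N, (inner ℂ (T x) x : ℂ) =
      inner ℂ (z • (x : H₀)) (x : H₀) + inner ℂ (γ ↑x) (↑x : H₀) := by
    intro x
    simp only [hTdef, ContinuousLinearMap.add_apply, ContinuousLinearMap.smul_apply,
      ContinuousLinearMap.id_apply, inner_add_left, hNN, Submodule.coe_inner,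
      Submodule.coe_smul]
  have hsm : ∀ x : H₀, (inner ℂ (z • x) x : ℂ).re = z.re * ‖x‖ ^ 2 := by
    intro x
    rw [inner_smul_left, inner_self_eq_norm_sq_to_K]
    simp [Complex.mul_re, ← Complex.ofReal_pow]
  -- coercivity of T
  have hTco : ∀ x : ↥N, (z.re + c) * ‖x‖ ^ 2 ≤ (inner ℂ (T x) x : ℂ).re := by
    intro x
    have h3 := hγ (x : H₀)
    rw [hTinner x, Complex.add_re, hsm, Submodule.norm_coe] at *
    linarith
  -- antilipschitz bound
  have hbound : ∀ x : ↥N, ‖x‖ ≤ (z.re + c)⁻¹ * ‖T x‖ := by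
    intro x
    rcases eq_or_ne ‖x‖ 0 with h | h
    · simp [h]
      positivity
    · have hx : 0 < ‖x‖ := lt_of_le_of_ne (norm_nonneg _) (Ne.symm h)
      have h1 := hTco x
      have h2 := re_inner_le_norm (𝕜 := ℂ) (T x) x
      rw [RCLike.re_to_complex] at h2
      rw [inv_mul_eq_div, le_div_iff₀ hm]
      nlinarith
  have hanti : AntilipschitzWith ⟨(z.re + c)⁻¹, by positivity⟩ T :=
    T.antilipschitz_of_bound hbound
  have hker : LinearMap.ker (T : ↥N →ₗ[ℂ] ↥N) = ⊥ := by
    rw [Submodule.eq_bot_iff]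
    intro x hx
    have hx' : T x = 0 := hx
    exact hanti.injective (by rw [hx', map_zero])
  have hclosed : IsClosed (LinearMap.range (T : ↥N →ₗ[ℂ] ↥N) : Set ↥N) := by
    have h := hanti.isClosed_range T.uniformContinuous
    have heq : (LinearMap.range (T : ↥N →ₗ[ℂ] ↥N) : Set ↥N) = Set.range T := by
      ext y; simp
    rw [heq]; exact h
  haveI : CompleteSpace (LinearMap.range (T : ↥N →ₗ[ℂ] ↥N)) := hclosed.completeSpace_coe
  have hrange : LinearMap.range (T : ↥N →ₗ[ℂ] ↥N) = ⊤ := by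
    rw [← Submodule.orthogonal_eq_bot_iff, Submodule.eq_bot_iff]
    intro y hy
    rw [Submodule.mem_orthogonal] at hy
    have h0 : (inner ℂ (T y) y : ℂ) = 0 := hy (T y) (LinearMap.mem_range_self _ y)
    have h1 := hTco y
    rw [h0] at h1
    simp only [Complex.zero_re] at h1
    have h2 : ‖y‖ = 0 := by
      by_contra hne
      have hpos : 0 < ‖y‖ := lt_of_le_of_ne (norm_nonneg y) (Ne.symm hne)
      nlinarith [mul_pos hm (pow_pos hpos 2)]
    exact norm_eq_zero.mp h2
  set e : ↥N ≃L[ℂ] ↥N := ContinuousLinearEquiv.ofBijective T hker hrange with hedef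
  have heT : ∀ x, e x = T x := fun x => rfl
  refine ⟨e.symm.toContinuousLinearMap, ?_, ?_, ?_⟩
  · ext x
    exact congrArg Subtype.val (e.apply_symm_apply x)
  · ext x
    exact congrArg Subtype.val (e.symm_apply_apply x)
  · intro u
    set v : ↥N := e.symm (G_MN u) with hvdef
    have hv : T v = G_MN u := e.apply_symm_apply _
    -- orthogonality
    have hvu : (inner ℂ (↑v : H₀) (↑u : H₀) : ℂ) = 0 := by
      have hu := u.2
      rw [Submodule.mem_orthogonal] at hu
      exact hu ↑v v.2
    have huv : (inner ℂ (↑u : H₀) (↑v : H₀) : ℂ) = 0 := by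
      rw [← inner_conj_symm, hvu, map_zero]
    -- key identity from Tv = G_MN u
    have hB : (inner ℂ (γ ↑u) (↑v : H₀) : ℂ).re =
        z.re * ‖v‖ ^ 2 + (inner ℂ (γ ↑v) (↑v : H₀) : ℂ).re := by
      have h1 : (inner ℂ (T v) v : ℂ) = inner ℂ (γ ↑u) (↑v : H₀) := by rw [hv]; exact hMN u v
      rw [hTinner v] at h1
      rw [← h1, Complex.add_re, hsm, Submodule.norm_coe]
    -- coercivity at w = u - v
    have hw := hγ ((↑u : H₀) - ↑v)
    have hwnorm : ‖(↑u : H₀) - ↑v‖ ^ 2 = ‖u‖ ^ 2 + ‖v‖ ^ 2 := by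
      rw [@norm_sub_sq ℂ]
      have h0 : RCLike.re (inner ℂ (↑u : H₀) (↑v : H₀) : ℂ) = 0 := by rw [huv]; simp
      rw [h0, Submodule.norm_coe, Submodule.norm_coe]
      ring
    have hexp : (inner ℂ (γ ((↑u : H₀) - ↑v)) ((↑u : H₀) - ↑v) : ℂ).re =
        (inner ℂ (γ ↑u) (↑u : H₀) : ℂ).re - (inner ℂ (γ ↑u) (↑v : H₀) : ℂ).re
        - (inner ℂ (γ ↑v) (↑u : H₀) : ℂ).re + (inner ℂ (γ ↑v) (↑v : H₀) : ℂ).re := by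
      rw [map_sub, inner_sub_left, inner_sub_right, inner_sub_right]
      simp only [Complex.sub_re]
      ring
    -- final computation
    have hS : (inner ℂ ((G_MM - G_NM.comp (e.symm.toContinuousLinearMap.comp G_MN)) u) u : ℂ).re =
        (inner ℂ (γ ↑u) (↑u : H₀) : ℂ).re - (inner ℂ (γ ↑v) (↑u : H₀) : ℂ).re := by
      simp only [ContinuousLinearMap.sub_apply, ContinuousLinearMap.comp_apply, inner_sub_left,
        Complex.sub_re, ContinuousLinearEquiv.coe_coe]
      rw [hMM, hNM]
    rw [hS]
    rw [hwnorm, hexp] at hw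
    have hmin1 : min (z.re + c) c ≤ c := min_le_right _ _
    nlinarith [sq_nonneg ‖v‖, sq_nonneg ‖u‖]
end

section
/- Let H₀, H₁ be Hilbert spaces, γ ∈ L(H₀) with Re γ ≥ c > 0, and C : dom(C) ⊆ H₀ → H₁ densely defined, closed, injective, and surjective. Let δ > 0 and z ∈ ℂ \ {0}. Then for all (u, v) ∈ H₀ × H₁: Re⟨[[γ - δ, (γ - δ)δ C⁻¹],[0, δ]](u,v), (u,v)⟩ ≥ (c - δ(1 + ½((‖γ‖ + δ)‖C⁻¹‖)²))‖u‖² + (δ/2)‖v‖². -/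
/-- for `Re γ ≥ c > 0`, `C` densely defined, closed, bijective with bounded
inverse `Cinv`, `δ > 0` and `z ∈ ℂ \ {0}`, the bounded block operator
`[[γ - δ, (γ - δ) δ C⁻¹],[0, δ]] : (u,v) ↦ ((γ-δ)u + δ (γ-δ)(C⁻¹ v), δ v)` satisfies the
real-part lower bound
`Re ⟪·(u,v), (u,v)⟫ ≥ (c - δ(1 + ½((‖γ‖+δ)‖C⁻¹‖)²))‖u‖² + (δ/2)‖v‖²`. -/
theorem stmt6 {H₀ H₁ : Type*} [NormedAddCommGroup H₀] [InnerProductSpace ℂ H₀] [CompleteSpace H₀]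
    [NormedAddCommGroup H₁] [InnerProductSpace ℂ H₁] [CompleteSpace H₁]
    (γ : H₀ →L[ℂ] H₀) (c : ℝ) (hc : 0 < c)
    (hγ : ∀ x : H₀, c * ‖x‖ ^ 2 ≤ (inner ℂ (γ x) x : ℂ).re)
    (C : H₀ →ₗ.[ℂ] H₁) (hdense : Dense (C.domain : Set H₀)) (hclosed : C.IsClosed)
    (Cinv : H₁ →L[ℂ] H₀)
    (hCinv₁ : ∀ u : C.domain, Cinv (C u) = ↑u)
    (hCinv₂ : ∀ g : H₁, ∃ h : Cinv g ∈ C.domain, C ⟨Cinv g, h⟩ = g)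
    (δ : ℝ) (hδ : 0 < δ) (z : ℂ) (hz : z ≠ 0) :
    ∀ (u : H₀) (v : H₁),
      (c - δ * (1 + (1 / 2) * ((‖γ‖ + δ) * ‖Cinv‖) ^ 2)) * ‖u‖ ^ 2 + (δ / 2) * ‖v‖ ^ 2 ≤
        ((inner ℂ ((γ - (δ : ℂ) • ContinuousLinearMap.id ℂ H₀) u
            + (δ : ℂ) • ((γ - (δ : ℂ) • ContinuousLinearMap.id ℂ H₀) (Cinv v))) u : ℂ)
          + (inner ℂ ((δ : ℂ) • v) v : ℂ)).re := by
  intro u v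
  set A := γ - (δ : ℂ) • ContinuousLinearMap.id ℂ H₀ with hA
  have hAnorm : ‖A‖ ≤ ‖γ‖ + δ := by
    refine (norm_sub_le _ _).trans ?_
    gcongr
    calc ‖(δ : ℂ) • ContinuousLinearMap.id ℂ H₀‖
        = δ * ‖ContinuousLinearMap.id ℂ H₀‖ := by
          rw [norm_smul]; simp [abs_of_pos hδ]
      _ ≤ δ * 1 := by gcongr; exact ContinuousLinearMap.norm_id_le
      _ = δ := mul_one δ
  -- first term
  have h1 : (c - δ) * ‖u‖ ^ 2 ≤ (inner ℂ (A u) u : ℂ).re := by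
    have hAu : A u = γ u - (δ : ℂ) • u := by simp [hA]
    rw [hAu, inner_sub_left, inner_smul_left]
    have := hγ u
    have hself : (inner ℂ u u : ℂ).re = ‖u‖ ^ 2 := by
      simpa using inner_self_eq_norm_sq (𝕜 := ℂ) u
    simp only [Complex.sub_re, Complex.mul_re, Complex.conj_re, Complex.conj_im,
      Complex.ofReal_re, Complex.ofReal_im]
    have him : (inner ℂ u u : ℂ).im = 0 := by
      exact inner_self_im (𝕜 := ℂ) u
    nlinarith [hγ u]
  -- cross term
  have h2 : -(δ * ((‖γ‖ + δ) * ‖Cinv‖ * ‖v‖ * ‖u‖)) ≤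
      (inner ℂ ((δ : ℂ) • (A (Cinv v))) u : ℂ).re := by
    have hb : ‖(inner ℂ (A (Cinv v)) u : ℂ)‖ ≤ (‖γ‖ + δ) * ‖Cinv‖ * ‖v‖ * ‖u‖ := by
      refine (norm_inner_le_norm _ _).trans ?_
      have h3 : ‖A (Cinv v)‖ ≤ (‖γ‖ + δ) * (‖Cinv‖ * ‖v‖) := by
        calc ‖A (Cinv v)‖ ≤ ‖A‖ * ‖Cinv v‖ := A.le_opNorm _
          _ ≤ (‖γ‖ + δ) * (‖Cinv‖ * ‖v‖) :=
              mul_le_mul hAnorm (Cinv.le_opNorm v) (norm_nonneg _)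
                (by positivity)
      calc ‖A (Cinv v)‖ * ‖u‖ ≤ (‖γ‖ + δ) * (‖Cinv‖ * ‖v‖) * ‖u‖ := by
            gcongr
        _ = (‖γ‖ + δ) * ‖Cinv‖ * ‖v‖ * ‖u‖ := by ring
    rw [inner_smul_left]
    have : ((starRingEnd ℂ) (δ : ℂ) * inner ℂ (A (Cinv v)) u).re
        = δ * (inner ℂ (A (Cinv v)) u : ℂ).re := by
      simp [Complex.mul_re]
    rw [this]
    have hre : -((‖γ‖ + δ) * ‖Cinv‖ * ‖v‖ * ‖u‖) ≤ (inner ℂ (A (Cinv v)) u : ℂ).re := by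
      have := abs_le.mp ((Complex.abs_re_le_norm _).trans hb)
      · exact this.1
    nlinarith [hre, hδ.le]
  -- last term
  have h3 : (inner ℂ ((δ : ℂ) • v) v : ℂ).re = δ * ‖v‖ ^ 2 := by
    rw [inner_smul_left]
    have hself : (inner ℂ v v : ℂ).re = ‖v‖ ^ 2 := by
      simpa using inner_self_eq_norm_sq (𝕜 := ℂ) v
    have him : (inner ℂ v v : ℂ).im = 0 := by
      exact inner_self_im (𝕜 := ℂ) v
    rw [Complex.mul_re, hself, him]; simp
  rw [inner_add_left]
  have key : (c - δ * (1 + (1 / 2) * ((‖γ‖ + δ) * ‖Cinv‖) ^ 2)) * ‖u‖ ^ 2 + (δ / 2) * ‖v‖ ^ 2 ≤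
      (inner ℂ (A u) u : ℂ).re + (inner ℂ ((δ : ℂ) • (A (Cinv v))) u : ℂ).re + δ * ‖v‖ ^ 2 := by
    nlinarith [h1, h2, sq_nonneg ((‖γ‖ + δ) * ‖Cinv‖ * ‖u‖ - ‖v‖), hδ.le, sq_nonneg ‖u‖, sq_nonneg ‖v‖]
  calc _ ≤ (inner ℂ (A u) u : ℂ).re + (inner ℂ ((δ : ℂ) • (A (Cinv v))) u : ℂ).re + δ * ‖v‖ ^ 2 := key
    _ = _ := by rw [← h3]; simp only [Complex.add_re]
end

section
/- Let H₀, H₁ be Hilbert spaces, γ ∈ L(H₀) with Re γ ≥ c > 0, and C : dom(C) ⊆ H₀ → H₁ densely defined, closed, injective and surjective. Define B := -[[γ, 0],[0, 0]] - [[0, -C*],[C, 0]] on dom(C) × dom(C*). Then there exists δ > 0 such that {z ∈ ℂ : Re z > -δ} ⊆ ρ(B) and sup{‖(z - B)⁻¹‖ : Re z > -δ} < ∞. -/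
open scoped ComplexConjugate

local notation "⟪" x ", " y "⟫" => @inner ℂ _ _ x y

set_option maxHeartbeats 1000000
private lemma sq_cancel {s M : ℝ} (hs : 0 ≤ s) (hM : 0 ≤ M) (h : s^2 ≤ M*s) : s ≤ M := by
  rcases le_or_gt s M with h' | h'
  · exact h'
  · nlinarith

private lemma regionA_arith {L G r nu nv nf ng : ℝ} (hL1 : 1 ≤ L) (hG0 : 0 ≤ G)
    (hr0 : 0 < r) (hrkey : r * (L^2 * (1+G)) = 1/2)
    (hnu0 : 0 ≤ nu) (hnv0 : 0 ≤ nv) (hnf0 : 0 ≤ nf) (hng0 : 0 ≤ ng)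
    (hnu_le : nu ≤ L*ng + r*(L*nv)) (hnv_le : nv ≤ r*(L*nu) + L*(G*nu) + L*nf) :
    nu + nv ≤ 5*(1+G)*L^2 * (nf + ng) := by
  have hL0 : 0 < L := lt_of_lt_of_le one_pos hL1
  have h1G : 1 ≤ L^2*(1+G) := by nlinarith [sq_nonneg (L-1)]
  have hr1 : r ≤ 1/2 := by nlinarith [mul_le_mul_of_nonneg_left h1G hr0.le]
  have hrL2 : r*L^2 ≤ 1/2 := by
    nlinarith [mul_nonneg (mul_nonneg hr0.le (sq_nonneg L)) hG0]
  have hq : (r*L + L*G)*(r*L) ≤ 1/2 := by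
    nlinarith [mul_nonneg (mul_nonneg hr0.le (sq_nonneg L)) (by linarith : (0:ℝ) ≤ 1 - r)]
  have hL2 : 1 ≤ L^2 := by nlinarith
  have hq2 : (r*L + L*G)*L ≤ (1+G)*L^2 := by nlinarith
  have hco : 0 ≤ r*L + L*G := by
    have := mul_nonneg hr0.le hL0.le
    have := mul_nonneg hL0.le hG0
    linarith
  have key := mul_le_mul_of_nonneg_left hnu_le hco
  have h2 := mul_le_mul_of_nonneg_right hq2 hng0
  have h3 := mul_le_mul_of_nonneg_right hq hnv0
  -- nv ≤ (1+G)L^2 * ng + (1/2) nv + L*nf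
  have hnv2 : nv ≤ 2*((1+G)*L^2)*ng + 2*(L*nf) := by nlinarith
  have hnuf : nu ≤ L*ng + nv := by
    have hrL : r * L ≤ 1 := by nlinarith
    nlinarith [mul_le_mul_of_nonneg_right hrL hnv0]
  have hLle : L ≤ (1+G)*L^2 := by nlinarith
  nlinarith [mul_le_mul_of_nonneg_right hLle hng0, mul_le_mul_of_nonneg_right hLle hnf0]

private lemma regionB_arith {c r G δ K₁ nu nv nf ng : ℝ} (hc : 0 < c) (hr0 : 0 < r)
    (hG0 : 0 ≤ G) (hδ0 : 0 < δ)
    (hδc : δ * (4*r+4*G) ≤ c*r) (hK₁ : c*r*K₁ = 4*r+4*G+4*c)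
    (hnu0 : 0 ≤ nu) (hnv0 : 0 ≤ nv) (hnf0 : 0 ≤ nf) (hng0 : 0 ≤ ng)
    (hcore : c*nu^2 ≤ (nu*nf + nv*ng) + δ*(nu^2+nv^2))
    (hE2' : r*(nv^2 - nu^2) ≤ 2*(nu*nf + nv*ng) + 2*G*nu^2) :
    nu + nv ≤ 2*K₁*(nf+ng) := by
  have hcr : 0 < c*r := mul_pos hc hr0
  have hK₁0 : 0 < K₁ := by nlinarith
  have hS0 : (0:ℝ) ≤ nu^2+nv^2 := by positivity
  have h3 : r*(nu^2+nv^2) ≤ (2*r+2*G)*nu^2 + 2*(nu*nf + nv*ng) := by nlinarith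
  have t1 : (2*r+2*G)*(c*nu^2) ≤ (2*r+2*G)*((nu*nf + nv*ng) + δ*(nu^2+nv^2)) :=
    mul_le_mul_of_nonneg_left hcore (by linarith)
  have t2 : δ*(4*r+4*G)*(nu^2+nv^2) ≤ c*r*(nu^2+nv^2) :=
    mul_le_mul_of_nonneg_right hδc hS0
  have hfinal : c*r*(nu^2+nv^2) ≤ (4*r+4*G+4*c)*(nu*nf+nv*ng) := by
    nlinarith [mul_le_mul_of_nonneg_left h3 hc.le]
  have hSK : nu^2+nv^2 ≤ K₁*(nu*nf+nv*ng) := by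
    have h := hfinal
    rw [← hK₁] at h
    have := (mul_le_mul_iff_right₀ hcr).1 (by nlinarith [h] : c*r*(nu^2+nv^2) ≤ c*r*(K₁*(nu*nf+nv*ng)))
    linarith
  have hEle : nu*nf + nv*ng ≤ (nf+ng)*(nu+nv) := by nlinarith
  have h12 : (nu+nv)^2 ≤ (2*K₁*(nf+ng))*(nu+nv) := by
    nlinarith [hSK, sq_nonneg (nu-nv), mul_le_mul_of_nonneg_left hEle hK₁0.le]
  exact sq_cancel (by positivity) (by positivity) h12

private lemma regionC_re {r δ : ℝ} {z : ℂ} (hr0 : 0 < r) (hδr : δ ≤ r/2) (hz : -δ < z.re)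
    (hA : r < ‖z‖) (hB : |z.im| < r/2) : r/2 < z.re := by
  have h2 : (‖z‖)^2 = z.re^2 + z.im^2 := by
    rw [Complex.sq_norm, Complex.normSq_apply]; ring
  have h1 : r^2 < z.re^2 + z.im^2 := by nlinarith [hA, hr0, norm_nonneg z]
  have h3 : z.im^2 < r^2/4 := by nlinarith [sq_abs z.im, abs_nonneg z.im]
  have h4 : r^2*(3/4) < z.re^2 := by nlinarith
  rcases le_or_gt z.re 0 with h5 | h5
  · exfalso
    have h6 : -(r/2) < z.re := by linarith
    nlinarith
  · nlinarith

private lemma regionC_arith {r c zre nu nv nf ng K : ℝ} (hr0 : 0 < r) (hc : 0 < c)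
    (hnu0 : 0 ≤ nu) (hnv0 : 0 ≤ nv) (hnf0 : 0 ≤ nf) (hng0 : 0 ≤ ng)
    (hzre : r/2 < zre)
    (hE1' : zre*(nu^2+nv^2) + c*nu^2 ≤ nu*nf + nv*ng)
    (hK0 : 0 ≤ K) (hrK : 4 ≤ r*K) :
    nu + nv ≤ K*(nf+ng) := by
  have hS0 : (0:ℝ) ≤ nu^2+nv^2 := by positivity
  have hS : (r/2)*(nu^2+nv^2) ≤ nu*nf + nv*ng := by
    have hp : 0 ≤ (zre - r/2)*(nu^2+nv^2) := mul_nonneg (by linarith) hS0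
    have hcnu : 0 ≤ c*nu^2 := by positivity
    nlinarith
  have hEle : nu*nf + nv*ng ≤ (nf+ng)*(nu+nv) := by nlinarith
  have h12 : r*(nu+nv)^2 ≤ (4*(nf+ng))*(nu+nv) := by
    nlinarith [sq_nonneg (nu-nv)]
  have h13 : r*((nu+nv)^2) ≤ r*((K*(nf+ng))*(nu+nv)) := by
    nlinarith [mul_le_mul_of_nonneg_right hrK (mul_nonneg (add_nonneg hnf0 hng0) (add_nonneg hnu0 hnv0))]
  have := (mul_le_mul_iff_right₀ hr0).1 h13
  exact sq_cancel (by positivity) (by positivity) this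

private lemma energy {H₀ H₁ : Type*} [NormedAddCommGroup H₀] [InnerProductSpace ℂ H₀]
    [CompleteSpace H₀] [NormedAddCommGroup H₁] [InnerProductSpace ℂ H₁] [CompleteSpace H₁]
    (γ' : H₀ →L[ℂ] H₀) (c : ℝ) (hc : 0 < c)
    (hγ' : ∀ x : H₀, c * ‖x‖ ^ 2 ≤ (inner ℂ (γ' x) x : ℂ).re)
    (C : H₀ →ₗ.[ℂ] H₁) (J : H₁ →L[ℂ] H₀) (D : H₀ →L[ℂ] H₁)
    (hCJ : ∀ u : C.domain, J (C u) = (u : H₀))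
    (hDadj : ∀ v : C.adjoint.domain, D (C.adjoint v) = (v : H₁))
    (hfa : ∀ (v : C.adjoint.domain) (u : C.domain),
      ⟪(C.adjoint v : H₀), (u : H₀)⟫ = ⟪(v : H₁), C u⟫) :
    ∃ δ > (0:ℝ), ∃ K : ℝ, 1 ≤ K ∧ ∀ z : ℂ, -δ < z.re →
      ∀ (u : C.domain) (v : C.adjoint.domain) (f : H₀) (g : H₁),
        z • (u : H₀) + γ' (u : H₀) - C.adjoint v = f → z • (v : H₁) + C u = g →
        ‖(u : H₀)‖ + ‖(v : H₁)‖ ≤ K * (‖f‖ + ‖g‖) := by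
  obtain ⟨G, hG0, hγG⟩ : ∃ G, 0 ≤ G ∧ ∀ x : H₀, ‖γ' x‖ ≤ G * ‖x‖ :=
    ⟨‖γ'‖, norm_nonneg _, fun x => γ'.le_opNorm x⟩
  obtain ⟨L, hL1, hJL, hDL⟩ : ∃ L, 1 ≤ L ∧ (∀ x, ‖J x‖ ≤ L*‖x‖) ∧ (∀ x, ‖D x‖ ≤ L*‖x‖) := by
    refine ⟨max (max ‖J‖ ‖D‖) 1, le_max_right _ _, fun x => ?_, fun x => ?_⟩
    · exact le_trans (J.le_opNorm x) (mul_le_mul_of_nonneg_right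
        (le_trans (le_max_left _ _) (le_max_left _ _)) (norm_nonneg _))
    · exact le_trans (D.le_opNorm x) (mul_le_mul_of_nonneg_right
        (le_trans (le_max_right _ _) (le_max_left _ _)) (norm_nonneg _))
  have hL0 : 0 < L := lt_of_lt_of_le one_pos hL1
  obtain ⟨r, hr0, hrkey⟩ : ∃ r, 0 < r ∧ r * (L^2 * (1+G)) = 1/2 :=
    ⟨1/(2 * L^2 * (1+G)), by positivity, by field_simp⟩
  obtain ⟨δ, hδ0, hδr, hδc⟩ : ∃ δ, 0 < δ ∧ δ ≤ r/2 ∧ δ * (4*r+4*G) ≤ c*r := by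
    refine ⟨min (r/2) (c*r/(4*r+4*G)), lt_min (by positivity) (by positivity),
      min_le_left _ _, ?_⟩
    calc (min (r/2) (c*r/(4*r+4*G))) * (4*r+4*G) ≤ (c*r/(4*r+4*G)) * (4*r+4*G) :=
          mul_le_mul_of_nonneg_right (min_le_right _ _) (by positivity)
      _ = c*r := by field_simp
  obtain ⟨K₁, hK₁0, hK₁⟩ : ∃ K₁, 0 ≤ K₁ ∧ c*r*K₁ = 4*r+4*G+4*c :=
    ⟨(4*r+4*G+4*c)/(c*r), by positivity, by field_simp⟩
  obtain ⟨K, hK1, hKA, hKB, hKC⟩ :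
      ∃ K, 1 ≤ K ∧ 5*(1+G)*L^2 ≤ K ∧ 2*K₁ ≤ K ∧ 4 ≤ r*K := by
    refine ⟨5*(1+G)*L^2 + 2*K₁ + 4/r + 1, ?_, ?_, ?_, ?_⟩
    · have h1 : 0 ≤ 5*(1+G)*L^2 := by positivity
      have h2 : 0 ≤ 4/r := by positivity
      linarith
    · have h2 : 0 ≤ 4/r := by positivity
      linarith
    · have h1 : 0 ≤ 5*(1+G)*L^2 := by positivity
      have h2 : 0 ≤ 4/r := by positivity
      linarith
    · have h1 : 0 ≤ 5*(1+G)*L^2 := by positivity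
      have h3 : r*(4/r) = 4 := by field_simp
      nlinarith [mul_le_mul_of_nonneg_left (le_refl (4/r)) hr0.le]
  have hK0 : 0 ≤ K := by linarith
  refine ⟨δ, hδ0, K, hK1, ?_⟩
  intro z hz u v f g e1 e2
  have hnu0 : 0 ≤ ‖(u:H₀)‖ := norm_nonneg _
  have hnv0 : 0 ≤ ‖(v:H₁)‖ := norm_nonneg _
  have hnf0 : 0 ≤ ‖f‖ := norm_nonneg _
  have hng0 : 0 ≤ ‖g‖ := norm_nonneg _
  have hCu : C u = g - z • (v : H₁) := by rw [← e2]; abel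
  have hCv : C.adjoint v = z • (u : H₀) + γ' (u : H₀) - f := by rw [← e1]; abel
  by_cases hA : ‖z‖ ≤ r
  -- Region A : |z| ≤ r
  · have hu' : (u : H₀) = J g - z • J (v : H₁) := by
      rw [← hCJ u, hCu, map_sub, map_smul]
    have hv' : (v : H₁) = z • D (u : H₀) + D (γ' (u : H₀)) - D f := by
      rw [← hDadj v, hCv, map_sub, map_add, map_smul]
    have hJv : ‖z • J (v:H₁)‖ ≤ r * (L * ‖(v:H₁)‖) := by
      rw [norm_smul]
      exact mul_le_mul hA (hJL _) (norm_nonneg _) hr0.le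
    have hnu_le : ‖(u:H₀)‖ ≤ L*‖g‖ + r*(L*‖(v:H₁)‖) := by
      rw [hu']
      exact le_trans (norm_sub_le _ _) (by linarith [hJL g])
    have hDu : ‖z • D (u:H₀)‖ ≤ r * (L*‖(u:H₀)‖) := by
      rw [norm_smul]
      exact mul_le_mul hA (hDL _) (norm_nonneg _) hr0.le
    have hDγ : ‖D (γ' (u:H₀))‖ ≤ L*(G*‖(u:H₀)‖) := by
      refine le_trans (hDL _) ?_
      exact mul_le_mul_of_nonneg_left (hγG _) hL0.le
    have hnv_le : ‖(v:H₁)‖ ≤ r*(L*‖(u:H₀)‖) + L*(G*‖(u:H₀)‖) + L*‖f‖ := by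
      rw [hv']
      refine le_trans (norm_sub_le _ _) ?_
      have := norm_add_le (z • D (u:H₀)) (D (γ' (u:H₀)))
      linarith [hDL f]
    have hmain := regionA_arith hL1 hG0 hr0 hrkey hnu0 hnv0 hnf0 hng0 hnu_le hnv_le
    exact le_trans hmain (mul_le_mul_of_nonneg_right hKA (by positivity))
  · -- inner product identities
    have hwf : ⟪(u:H₀), f⟫ = z*((‖(u:H₀)‖^2 : ℝ):ℂ) + ⟪(u:H₀), γ' (u:H₀)⟫
        - ⟪(u:H₀), (C.adjoint v : H₀)⟫ := by
      rw [← e1]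
      simp only [inner_add_right, inner_sub_right, inner_smul_right, inner_self_eq_norm_sq_to_K]
      push_cast
      rfl
    have hwg : ⟪(v:H₁), g⟫ = z*((‖(v:H₁)‖^2 : ℝ):ℂ) + conj ⟪(u:H₀), (C.adjoint v : H₀)⟫ := by
      rw [← e2]
      simp only [inner_add_right, inner_smul_right, inner_self_eq_norm_sq_to_K]
      rw [← hfa v u, ← inner_conj_symm]
      push_cast
      rfl
    have E1 : (⟪(u:H₀), f⟫ : ℂ).re + (⟪(v:H₁), g⟫ : ℂ).re
        = z.re*(‖(u:H₀)‖^2+‖(v:H₁)‖^2) + (⟪(u:H₀), γ' (u:H₀)⟫ : ℂ).re := by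
      rw [hwf, hwg]
      simp only [Complex.add_re, Complex.sub_re, Complex.mul_re, Complex.conj_re,
        Complex.ofReal_re, Complex.ofReal_im]
      ring
    have E2 : (⟪(u:H₀), f⟫ : ℂ).im - (⟪(v:H₁), g⟫ : ℂ).im
        = z.im*(‖(u:H₀)‖^2-‖(v:H₁)‖^2) + (⟪(u:H₀), γ' (u:H₀)⟫ : ℂ).im := by
      rw [hwf, hwg]
      simp only [Complex.add_im, Complex.sub_im, Complex.mul_im, Complex.conj_im,
        Complex.ofReal_re, Complex.ofReal_im]
      ring
    have hbf1 : |(⟪(u:H₀), f⟫ : ℂ).re| ≤ ‖(u:H₀)‖*‖f‖ :=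
      le_trans (Complex.abs_re_le_norm _)
        (by exact norm_inner_le_norm _ _)
    have hbf2 : |(⟪(u:H₀), f⟫ : ℂ).im| ≤ ‖(u:H₀)‖*‖f‖ :=
      le_trans (Complex.abs_im_le_norm _)
        (by exact norm_inner_le_norm _ _)
    have hbg1 : |(⟪(v:H₁), g⟫ : ℂ).re| ≤ ‖(v:H₁)‖*‖g‖ :=
      le_trans (Complex.abs_re_le_norm _)
        (by exact norm_inner_le_norm _ _)
    have hbg2 : |(⟪(v:H₁), g⟫ : ℂ).im| ≤ ‖(v:H₁)‖*‖g‖ :=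
      le_trans (Complex.abs_im_le_norm _)
        (by exact norm_inner_le_norm _ _)
    have hγre : c*‖(u:H₀)‖^2 ≤ (⟪(u:H₀), γ' (u:H₀)⟫ : ℂ).re := by
      have h := hγ' (u:H₀)
      rwa [← inner_conj_symm, Complex.conj_re]
    have hγim : |(⟪(u:H₀), γ' (u:H₀)⟫ : ℂ).im| ≤ G*‖(u:H₀)‖^2 := by
      refine le_trans (Complex.abs_im_le_norm _) ?_
      refine le_trans (norm_inner_le_norm _ _) ?_
      nlinarith [hγG (u:H₀), norm_nonneg (γ' (u:H₀))]
    have hE1' : z.re*(‖(u:H₀)‖^2+‖(v:H₁)‖^2) + c*‖(u:H₀)‖^2 ≤ ‖(u:H₀)‖*‖f‖ + ‖(v:H₁)‖*‖g‖ := by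
      have h1 := abs_le.1 hbf1
      have h2 := abs_le.1 hbg1
      linarith [E1]
    have hS0 : (0:ℝ) ≤ ‖(u:H₀)‖^2+‖(v:H₁)‖^2 := by positivity
    have hcore : c*‖(u:H₀)‖^2 ≤ (‖(u:H₀)‖*‖f‖ + ‖(v:H₁)‖*‖g‖) + δ*(‖(u:H₀)‖^2+‖(v:H₁)‖^2) := by
      have hp : 0 ≤ (δ + z.re)*(‖(u:H₀)‖^2+‖(v:H₁)‖^2) := mul_nonneg (by linarith) hS0
      nlinarith [hE1']
    push_neg at hA
    by_cases hB : r/2 ≤ |z.im|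
    -- Region B
    · have hzimeq : z.im*(‖(u:H₀)‖^2-‖(v:H₁)‖^2)
          = (⟪(u:H₀), f⟫ : ℂ).im - (⟪(v:H₁), g⟫ : ℂ).im - (⟪(u:H₀), γ' (u:H₀)⟫ : ℂ).im := by
        linarith [E2]
      have h1 : |z.im * (‖(u:H₀)‖^2 - ‖(v:H₁)‖^2)| ≤ ‖(u:H₀)‖*‖f‖ + ‖(v:H₁)‖*‖g‖ + G*‖(u:H₀)‖^2 := by
        rw [hzimeq, abs_le]
        have h2 := abs_le.1 hbf2
        have h3 := abs_le.1 hbg2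
        have h4 := abs_le.1 hγim
        constructor <;> linarith
      have h5 : (r/2) * |‖(u:H₀)‖^2 - ‖(v:H₁)‖^2| ≤ |z.im| * |‖(u:H₀)‖^2-‖(v:H₁)‖^2| :=
        mul_le_mul_of_nonneg_right hB (abs_nonneg _)
      rw [← abs_mul] at h5
      have h6 : ‖(v:H₁)‖^2 - ‖(u:H₀)‖^2 ≤ |‖(u:H₀)‖^2 - ‖(v:H₁)‖^2| := by
        rw [abs_sub_comm]; exact le_abs_self _
      have hE2' : r*(‖(v:H₁)‖^2 - ‖(u:H₀)‖^2)
          ≤ 2*(‖(u:H₀)‖*‖f‖ + ‖(v:H₁)‖*‖g‖) + 2*G*‖(u:H₀)‖^2 := by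
        have h7 := mul_le_mul_of_nonneg_left h6 (by positivity : (0:ℝ) ≤ r/2)
        linarith [h1, h5]
      have h13 := regionB_arith hc hr0 hG0 hδ0 hδc hK₁ hnu0 hnv0 hnf0 hng0 hcore hE2'
      exact le_trans h13 (mul_le_mul_of_nonneg_right hKB (by positivity))
    -- Region C
    · push_neg at hB
      have hzre : r/2 < z.re := regionC_re hr0 hδr hz hA hB
      exact regionC_arith hr0 hc hnu0 hnv0 hnf0 hng0 hzre hE1' hK0 hKC

private lemma existsJ {H₀ H₁ : Type*} [NormedAddCommGroup H₀] [InnerProductSpace ℂ H₀]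
    [CompleteSpace H₀] [NormedAddCommGroup H₁] [InnerProductSpace ℂ H₁] [CompleteSpace H₁]
    (C : H₀ →ₗ.[ℂ] H₁) (hclosed : C.IsClosed)
    (hinj : ∀ u : C.domain, C u = 0 → (u : H₀) = 0)
    (hsurj : ∀ g : H₁, ∃ u : C.domain, C u = g) :
    ∃ J : H₁ →L[ℂ] H₀, (∀ g, J g ∈ C.domain) ∧
      (∀ g (h : J g ∈ C.domain), C ⟨J g, h⟩ = g) ∧
      (∀ u : C.domain, J (C u) = (u : H₀)) := by
  have hbij : Function.Bijective C.toFun := by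
    constructor
    · intro a b hab
      have hab2 : (C a : H₁) = C b := hab
      have h0 : C (a - b) = 0 := by
        rw [C.map_sub, hab2, sub_self]
      have h1 := hinj _ h0
      rw [Submodule.coe_sub, sub_eq_zero] at h1
      exact Subtype.coe_injective h1
    · exact hsurj
  let e : C.domain ≃ₗ[ℂ] H₁ := LinearEquiv.ofBijective C.toFun hbij
  let Jlin : H₁ →ₗ[ℂ] H₀ := C.domain.subtype ∘ₗ (e.symm : H₁ →ₗ[ℂ] C.domain)
  have hJmem : ∀ g, Jlin g ∈ C.domain := fun g => (e.symm g).2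
  have hJval : ∀ g, Jlin g = ((e.symm g : C.domain) : H₀) := fun g => rfl
  have hgr : (Jlin.graph : Set (H₁ × H₀)) = Prod.swap ⁻¹' (C.graph : Set (H₀ × H₁)) := by
    ext x
    obtain ⟨g, uu⟩ := x
    simp only [Set.mem_preimage, SetLike.mem_coe, LinearMap.mem_graph_iff,
      LinearPMap.mem_graph_iff, Prod.swap_prod_mk]
    constructor
    · intro h
      refine ⟨e.symm g, ?_, ?_⟩
      · rw [h, hJval]
      · exact e.apply_symm_apply g
    · rintro ⟨y, hy1, hy2⟩
      have hy3 : e.symm g = y := by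
        rw [← hy2]; exact e.symm_apply_apply y
      rw [hJval, hy3, hy1]
  have hcont : Continuous Jlin := by
    refine Jlin.continuous_of_isClosed_graph ?_
    rw [hgr]
    exact hclosed.preimage continuous_swap
  set Jc : H₁ →L[ℂ] H₀ := ⟨Jlin, hcont⟩ with hJcdef
  have hJceq : ∀ g, Jc g = Jlin g := fun g => rfl
  refine ⟨Jc, fun g => by rw [hJceq]; exact hJmem g, ?_, ?_⟩
  · intro g h
    have heq : (⟨Jc g, h⟩ : C.domain) = e.symm g := Subtype.ext ((hJceq g).trans (hJval g))
    rw [heq]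
    exact e.apply_symm_apply g
  · intro u
    rw [hJceq]
    show ((e.symm (C u) : C.domain) : H₀) = (u : H₀)
    have : e.symm (C u) = u := e.symm_apply_apply u
    rw [this]

set_option maxHeartbeats 1000000 in
/-- for `Re γ ≥ c > 0` and `C` densely defined, closed, injective and
surjective, the operator `B := -[[γ,0],[0,0]] - [[0,-C*],[C,0]]`,
`B(u,v) = (-γu + C* v, -Cu)` on `dom C × dom C*`, satisfies: there is `δ > 0` such that
every `z` with `Re z > -δ` is in the resolvent set of `B` and the resolvents
`(z - B)⁻¹` are uniformly bounded there. -/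
theorem stmt8 {H₀ H₁ : Type*} [NormedAddCommGroup H₀] [InnerProductSpace ℂ H₀] [CompleteSpace H₀]
    [NormedAddCommGroup H₁] [InnerProductSpace ℂ H₁] [CompleteSpace H₁]
    (γ : H₀ →L[ℂ] H₀) (c : ℝ) (hc : 0 < c)
    (hγ : ∀ x : H₀, c * ‖x‖ ^ 2 ≤ (inner ℂ (γ x) x : ℂ).re)
    (C : H₀ →ₗ.[ℂ] H₁) (hdense : Dense (C.domain : Set H₀)) (hclosed : C.IsClosed)
    (hinj : ∀ u : C.domain, C u = 0 → (u : H₀) = 0)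
    (hsurj : ∀ g : H₁, ∃ u : C.domain, C u = g) :
    ∃ δ > (0 : ℝ), ∃ K : ℝ, ∀ z : ℂ, -δ < z.re →
      ∃ R : (H₀ × H₁) →L[ℂ] (H₀ × H₁), ‖R‖ ≤ K ∧
        (∀ (u : C.domain) (v : C.adjoint.domain),
          R (z • (↑u : H₀) + γ ↑u - C.adjoint v, z • (↑v : H₁) + C u) = (↑u, ↑v)) ∧
        ∀ (f : H₀) (g : H₁),
          ∃ (hu : (R (f, g)).1 ∈ C.domain) (hv : (R (f, g)).2 ∈ C.adjoint.domain),
            z • (R (f, g)).1 + γ (R (f, g)).1 - C.adjoint ⟨(R (f, g)).2, hv⟩ = f ∧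
            z • (R (f, g)).2 + C ⟨(R (f, g)).1, hu⟩ = g := by
  obtain ⟨J, hJmem, hJC, hCJ⟩ := existsJ C hclosed hinj hsurj
  set D : H₀ →L[ℂ] H₁ := ContinuousLinearMap.adjoint J with hDdef
  have hfa : ∀ (v : C.adjoint.domain) (u : C.domain),
      ⟪(C.adjoint v : H₀), (u : H₀)⟫ = ⟪(v : H₁), C u⟫ :=
    fun v u => LinearPMap.adjoint_isFormalAdjoint hdense v u
  have hDmem : ∀ w : H₀, D w ∈ C.adjoint.domain := by
    intro w
    refine LinearPMap.mem_adjoint_domain_of_exists _ ⟨w, fun x => ?_⟩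
    rw [hDdef, ContinuousLinearMap.adjoint_inner_left, hCJ]
  have hDval : ∀ (w : H₀) (h : D w ∈ C.adjoint.domain), C.adjoint ⟨D w, h⟩ = w := by
    intro w h
    refine LinearPMap.adjoint_apply_eq hdense _ (fun x => ?_)
    show ⟪w, (x : H₀)⟫ = ⟪D w, C x⟫
    rw [hDdef, ContinuousLinearMap.adjoint_inner_left, hCJ]
  have hDadj : ∀ v : C.adjoint.domain, D (C.adjoint v) = (v : H₁) := by
    intro v
    refine ext_inner_left ℂ (fun g => ?_)
    rw [hDdef, ContinuousLinearMap.adjoint_inner_right]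
    have h1 : ⟪(C.adjoint v : H₀), J g⟫ = ⟪(v:H₁), g⟫ := by
      have h2 := hfa v ⟨J g, hJmem g⟩
      rwa [hJC g (hJmem g)] at h2
    rw [← inner_conj_symm (J g), h1, inner_conj_symm]
  have hγstar : ∀ x : H₀, c * ‖x‖ ^ 2 ≤ (inner ℂ ((ContinuousLinearMap.adjoint γ) x) x : ℂ).re := by
    intro x
    have h1 : (inner ℂ ((ContinuousLinearMap.adjoint γ) x) x : ℂ) = ⟪x, γ x⟫ :=
      ContinuousLinearMap.adjoint_inner_left γ x x
    rw [h1, ← inner_conj_symm, Complex.conj_re]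
    exact hγ x
  obtain ⟨δ₁, hδ₁, K₁, hK₁1, hen₁⟩ := energy γ c hc hγ C J D hCJ hDadj hfa
  obtain ⟨δ₂, hδ₂, K₂, hK₂1, hen₂⟩ :=
    energy (ContinuousLinearMap.adjoint γ) c hc hγstar C J D hCJ hDadj hfa
  refine ⟨min δ₁ δ₂, lt_min hδ₁ hδ₂, 2*K₁, ?_⟩
  intro z hz
  have hz₁ : -δ₁ < z.re := lt_of_le_of_lt (by simp [neg_le_neg_iff, min_le_left]) hz
  have hz₂ : -δ₂ < z.re := lt_of_le_of_lt (by simp [neg_le_neg_iff, min_le_right]) hz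
  -- generic injectivity of the M-type operator
  have Minj : ∀ (w : ℂ) (γ'' : H₀ →L[ℂ] H₀) (K' : ℝ),
      (∀ (u : C.domain) (v : C.adjoint.domain) (f : H₀) (g : H₁),
        w • (u:H₀) + γ'' (u:H₀) - C.adjoint v = f → w • (v:H₁) + C u = g →
        ‖(u:H₀)‖ + ‖(v:H₁)‖ ≤ K' * (‖f‖+‖g‖)) →
      ∀ b : H₀, b + w • (w • J (D b) + γ'' (J (D b))) = 0 → b = 0 := by
    intro w γ'' K' hen b hb
    set uu : C.domain := ⟨J (-(w • D b)), hJmem _⟩ with huudef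
    set vv : C.adjoint.domain := ⟨D b, hDmem b⟩ with hvvdef
    have huucoe : (uu : H₀) = -(w • J (D b)) := by
      show J (-(w • D b)) = -(w • J (D b))
      rw [map_neg, map_smul]
    have e2 : w • (vv : H₁) + C uu = 0 := by
      rw [hJC _ (hJmem _)]
      show w • D b + -(w • D b) = 0
      abel
    have e1 : w • (uu : H₀) + γ'' (uu : H₀) - C.adjoint vv = 0 := by
      rw [hDval b (hDmem b), huucoe, smul_neg, map_neg, map_smul]
      linear_combination (norm := module) -hb
    have hnn := hen uu vv 0 0 e1 e2
    simp only [norm_zero, add_zero, mul_zero] at hnn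
    have hvv0 : (vv : H₁) = 0 := by
      have := norm_nonneg (uu : H₀)
      have := norm_nonneg (vv : H₁)
      have : ‖(vv : H₁)‖ = 0 := by linarith
      exact norm_eq_zero.1 this
    have hDb0 : D b = 0 := hvv0
    have : b = -(w • (w • J (D b) + γ'' (J (D b)))) := eq_neg_of_add_eq_zero_left hb
    rw [hDb0, map_zero, smul_zero, map_zero, add_zero, smul_zero, neg_zero] at this
    exact this
  -- the concrete operator M for parameters (z, γ)
  set Φ : H₀ →L[ℂ] H₀ := z • ContinuousLinearMap.id ℂ H₀ + γ with hΦdef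
  have hΦapp : ∀ x, Φ x = z • x + γ x := by
    intro x
    simp [hΦdef, ContinuousLinearMap.add_apply, ContinuousLinearMap.smul_apply]
  set M : H₀ →L[ℂ] H₀ := ContinuousLinearMap.id ℂ H₀ + z • (Φ.comp (J.comp D)) with hMdef
  have hMapp : ∀ b, M b = b + z • (z • J (D b) + γ (J (D b))) := by
    intro b
    simp [hMdef, ContinuousLinearMap.add_apply, ContinuousLinearMap.smul_apply,
      ContinuousLinearMap.comp_apply, hΦapp]
  -- injectivity of M
  have hMinj : ∀ b, M b = 0 → b = 0 := by
    intro b hb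
    exact Minj z γ K₁ (hen₁ z hz₁) b (by rw [← hMapp]; exact hb)
  -- lower bound for M
  obtain ⟨κ, hκ1, hκ⟩ : ∃ κ : ℝ, 1 ≤ κ ∧ ∀ b, ‖b‖ ≤ κ * ‖M b‖ := by
    have hκpos : (0:ℝ) ≤ (‖z‖ + ‖γ‖)*K₁ := by positivity
    refine ⟨(‖z‖ + ‖γ‖)*K₁ + 1, by linarith, fun b => ?_⟩
    set uu : C.domain := ⟨J (-(z • D b)), hJmem _⟩ with huudef
    set vv : C.adjoint.domain := ⟨D b, hDmem b⟩ with hvvdef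
    have huucoe : (uu : H₀) = -(z • J (D b)) := by
      show J (-(z • D b)) = -(z • J (D b))
      rw [map_neg, map_smul]
    have e2 : z • (vv : H₁) + C uu = 0 := by
      rw [hJC _ (hJmem _)]
      show z • D b + -(z • D b) = 0
      abel
    have e1 : z • (uu : H₀) + γ (uu : H₀) - C.adjoint vv = -(M b) := by
      have hvveq : C.adjoint vv = b := hDval b (hDmem b)
      rw [hvveq, huucoe, hMapp b, smul_neg, map_neg, map_smul]
      linear_combination (norm := module)
    have hnn := hen₁ z hz₁ uu vv (-(M b)) 0 e1 e2
    rw [norm_zero, norm_neg, add_zero] at hnn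
    have hbeq : b = z • (uu:H₀) + γ (uu:H₀) + M b := by
      have h2 : z • (uu : H₀) + γ (uu : H₀) - b = -(M b) := by
        rw [← e1]
        congr 1
        exact (hDval b (hDmem b)).symm
      linear_combination (norm := module) -h2
    have hb1 : ‖b‖ ≤ ‖z‖ * ‖(uu:H₀)‖ + ‖γ‖ * ‖(uu:H₀)‖ + ‖M b‖ := by
      conv_lhs => rw [hbeq]
      refine le_trans (norm_add_le _ _) ?_
      have h3 := norm_add_le (z • (uu:H₀)) (γ (uu:H₀))
      have h4 : ‖z • (uu:H₀)‖ = ‖z‖ * ‖(uu:H₀)‖ := by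
        rw [norm_smul]
      have h5 := γ.le_opNorm (uu:H₀)
      linarith
    have habs : 0 ≤ ‖z‖ + ‖γ‖ := by positivity
    have huub : ‖(uu:H₀)‖ ≤ K₁ * ‖M b‖ := by
      have := norm_nonneg (vv:H₁)
      linarith
    have hMb0 : 0 ≤ ‖M b‖ := norm_nonneg _
    nlinarith [mul_le_mul_of_nonneg_left huub habs]
  have hκ0 : 0 < κ := lt_of_lt_of_le one_pos hκ1
  -- closed range
  have hclosedrange : IsClosed ((LinearMap.range (M : H₀ →ₗ[ℂ] H₀) : Submodule ℂ H₀) : Set H₀) := by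
    have hanti : AntilipschitzWith κ.toNNReal M := by
      refine ContinuousLinearMap.antilipschitz_of_bound M (fun x => ?_)
      calc ‖x‖ ≤ κ * ‖M x‖ := hκ x
        _ = κ.toNNReal * ‖M x‖ := by rw [Real.coe_toNNReal κ hκ0.le]
    have h := hanti.isClosed_range M.uniformContinuous
    rwa [LinearMap.coe_range]
  -- the adjoint identity
  set Φstar : H₀ →L[ℂ] H₀ :=
    (conj z) • ContinuousLinearMap.id ℂ H₀ + ContinuousLinearMap.adjoint γ with hΦstardef
  have hΦstarapp : ∀ x, Φstar x = (conj z) • x + (ContinuousLinearMap.adjoint γ) x := by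
    intro x
    simp [hΦstardef, ContinuousLinearMap.add_apply, ContinuousLinearMap.smul_apply]
  have hMadj : ∀ b x, ⟪M b, x⟫ = ⟪b, x + (conj z) • (J (D (Φstar x)))⟫ := by
    intro b x
    have lhs : ⟪M b, x⟫
        = ⟪b,x⟫ + conj z * (conj z * ⟪J (D b), x⟫ + ⟪γ (J (D b)), x⟫) := by
      rw [hMapp b]
      simp only [inner_add_left, inner_smul_left]
      try ring
    have rhs : ⟪b, x + (conj z) • (J (D (Φstar x)))⟫
        = ⟪b,x⟫ + conj z * (conj z * ⟪J (D b), x⟫ + ⟪γ (J (D b)), x⟫) := by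
      rw [inner_add_right, inner_smul_right, ← ContinuousLinearMap.adjoint_inner_left J,
        ContinuousLinearMap.adjoint_inner_right J, hΦstarapp x, inner_add_right,
        inner_smul_right, ContinuousLinearMap.adjoint_inner_right γ]
    rw [lhs, rhs]
  -- surjectivity of M
  have hsurjM : LinearMap.range (M : H₀ →ₗ[ℂ] H₀) = ⊤ := by
    have hcomplete : CompleteSpace (LinearMap.range (M : H₀ →ₗ[ℂ] H₀) : Submodule ℂ H₀) :=
      hclosedrange.completeSpace_coe
    refine Submodule.orthogonal_eq_bot_iff.1 ?_
    rw [Submodule.eq_bot_iff]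
    intro x hxmem
    rw [Submodule.mem_orthogonal] at hxmem
    have hx' : ∀ b, ⟪M b, x⟫ = 0 := fun b => hxmem (M b) (LinearMap.mem_range_self _ b)
    have hy0 : x + (conj z) • (J (D (Φstar x))) = 0 := by
      have h1 : ⟪(x + (conj z) • (J (D (Φstar x)))), (x + (conj z) • (J (D (Φstar x))))⟫ = (0:ℂ) := by
        rw [← hMadj (x + (conj z) • (J (D (Φstar x)))) x]
        exact hx' _
      exact inner_self_eq_zero.1 h1
    have hstep : Φstar x + (conj z) • ((conj z) • J (D (Φstar x))
        + (ContinuousLinearMap.adjoint γ) (J (D (Φstar x)))) = 0 := by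
      have h2 : Φstar (x + (conj z) • (J (D (Φstar x)))) = 0 := by rw [hy0, map_zero]
      rw [map_add, map_smul, hΦstarapp (J (D (Φstar x)))] at h2
      exact h2
    have hzconj : -δ₂ < (conj z).re := by
      rw [Complex.conj_re]; exact hz₂
    have hΦx : Φstar x = 0 :=
      Minj (conj z) (ContinuousLinearMap.adjoint γ) K₂ (hen₂ (conj z) hzconj) (Φstar x) hstep
    have h3 := hy0
    rw [hΦx, map_zero, map_zero, smul_zero, add_zero] at h3
    exact h3
  have hkerM : LinearMap.ker (M : H₀ →ₗ[ℂ] H₀) = ⊥ := LinearMap.ker_eq_bot'.2 (fun b hb => hMinj b hb)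
  set Minv := ContinuousLinearEquiv.ofBijective M hkerM hsurjM with hMinvdef
  have hMMinv : ∀ x, M (Minv.symm x) = x := by
    intro x
    exact Minv.apply_symm_apply x
  -- definition of R
  set bmap : (H₀ × H₁) →L[ℂ] H₀ :=
    (Minv.symm : H₀ →L[ℂ] H₀).comp ((Φ.comp (J.comp (ContinuousLinearMap.snd ℂ H₀ H₁)))
      - ContinuousLinearMap.fst ℂ H₀ H₁) with hbmapdef
  have hbapp : ∀ p : H₀ × H₁, M (bmap p) = Φ (J p.2) - p.1 := by
    intro p
    rw [hbmapdef]
    simp only [ContinuousLinearMap.comp_apply, ContinuousLinearMap.sub_apply,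
      ContinuousLinearMap.coe_fst', ContinuousLinearMap.coe_snd',
      ContinuousLinearMap.coe_coe]
    exact hMMinv _
  set Rv : (H₀ × H₁) →L[ℂ] H₁ := D.comp bmap with hRvdef
  set Ra : (H₀ × H₁) →L[ℂ] H₁ := ContinuousLinearMap.snd ℂ H₀ H₁ - z • Rv with hRadef
  set Ru : (H₀ × H₁) →L[ℂ] H₀ := J.comp Ra with hRudef
  set R : (H₀ × H₁) →L[ℂ] (H₀ × H₁) := Ru.prod Rv with hRdef
  have hR1 : ∀ p : H₀ × H₁, (R p).1 = J (p.2 - z • D (bmap p)) := by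
    intro p
    rw [hRdef]
    simp only [ContinuousLinearMap.prod_apply, hRudef, hRadef, hRvdef,
      ContinuousLinearMap.comp_apply, ContinuousLinearMap.sub_apply,
      ContinuousLinearMap.smul_apply, ContinuousLinearMap.coe_snd']
  have hR2 : ∀ p : H₀ × H₁, (R p).2 = D (bmap p) := fun p => rfl
  -- property 3 (R is a right inverse)
  have prop3 : ∀ p : H₀ × H₁,
      ∃ (hu : (R p).1 ∈ C.domain) (hv : (R p).2 ∈ C.adjoint.domain),
        z • (R p).1 + γ (R p).1 - C.adjoint ⟨(R p).2, hv⟩ = p.1 ∧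
        z • (R p).2 + C ⟨(R p).1, hu⟩ = p.2 := by
    intro p
    have h1 : (R p).1 = J (p.2 - z • D (bmap p)) := hR1 p
    have h2 : (R p).2 = D (bmap p) := hR2 p
    have hu : (R p).1 ∈ C.domain := by rw [h1]; exact hJmem _
    have hv : (R p).2 ∈ C.adjoint.domain := by rw [h2]; exact hDmem _
    refine ⟨hu, hv, ?_, ?_⟩
    · have hsub : (⟨(R p).2, hv⟩ : C.adjoint.domain) = ⟨D (bmap p), hDmem _⟩ :=
        Subtype.ext h2
      rw [hsub, hDval _ (hDmem _), h1, map_sub, map_smul]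
      have hMb := hbapp p
      rw [hMapp, hΦapp] at hMb
      rw [smul_sub, map_sub, map_smul, smul_add] at *
      linear_combination (norm := module) -hMb
    · have hsub : (⟨(R p).1, hu⟩ : C.domain) = ⟨J (p.2 - z • D (bmap p)), hJmem _⟩ :=
        Subtype.ext h1
      rw [hsub, hJC _ (hJmem _), h2]
      linear_combination (norm := module)
  -- norm bound
  have hK₁0 : (0:ℝ) ≤ K₁ := by linarith
  have hRbound : ‖R‖ ≤ 2*K₁ := by
    refine R.opNorm_le_bound (by linarith) (fun p => ?_)
    obtain ⟨hu, hv, q1, q2⟩ := prop3 p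
    have hen := hen₁ z hz₁ ⟨(R p).1, hu⟩ ⟨(R p).2, hv⟩ p.1 p.2 q1 q2
    have hf := norm_fst_le p
    have hg := norm_snd_le p
    have h1 : ‖(R p).1‖ + ‖(R p).2‖ ≤ K₁ * (2*‖p‖) := by
      refine le_trans hen ?_
      have : ‖p.1‖ + ‖p.2‖ ≤ 2*‖p‖ := by linarith
      exact mul_le_mul_of_nonneg_left this hK₁0
    have h2 : ‖R p‖ = max ‖(R p).1‖ ‖(R p).2‖ := Prod.norm_def _
    have h3 : (0:ℝ) ≤ ‖(R p).1‖ := norm_nonneg _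
    have h4 : (0:ℝ) ≤ ‖(R p).2‖ := norm_nonneg _
    rw [h2]
    have h5 : ‖(R p).1‖ ≤ 2*K₁*‖p‖ := by linarith
    have h6 : ‖(R p).2‖ ≤ 2*K₁*‖p‖ := by linarith
    exact max_le h5 h6
  refine ⟨R, hRbound, ?_, fun f g => prop3 (f, g)⟩
  intro u v
  set p : H₀ × H₁ := (z • (↑u : H₀) + γ ↑u - C.adjoint v, z • (↑v : H₁) + C u) with hpdef
  obtain ⟨hu, hv, q1, q2⟩ := prop3 p
  have q1' : z • (R p).1 + γ (R p).1 - C.adjoint (⟨(R p).2, hv⟩ : C.adjoint.domain)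
      = z • (↑u : H₀) + γ ↑u - C.adjoint v := q1
  have q2' : z • (R p).2 + C (⟨(R p).1, hu⟩ : C.domain) = z • (↑v : H₁) + C u := q2
  set U : C.domain := ⟨(R p).1, hu⟩ - u with hUdef
  set V : C.adjoint.domain := ⟨(R p).2, hv⟩ - v with hVdef
  have hUc : (U : H₀) = (R p).1 - ↑u := rfl
  have hVc : (V : H₁) = (R p).2 - ↑v := rfl
  have e1 : z • (U : H₀) + γ (U : H₀) - C.adjoint V = 0 := by
    rw [hUc, hVdef, LinearPMap.map_sub, smul_sub, map_sub]
    linear_combination (norm := module) q1'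
  have e2 : z • (V : H₁) + C U = 0 := by
    rw [hVc, hUdef, LinearPMap.map_sub, smul_sub]
    linear_combination (norm := module) q2'
  have hen := hen₁ z hz₁ U V 0 0 e1 e2
  simp only [norm_zero, add_zero, mul_zero] at hen
  have hU0 : (U:H₀) = 0 := by
    have h3 := norm_nonneg (U:H₀)
    have h4 := norm_nonneg (V:H₁)
    have : ‖(U:H₀)‖ = 0 := by linarith
    exact norm_eq_zero.1 this
  have hV0 : (V:H₁) = 0 := by
    have h3 := norm_nonneg (U:H₀)
    have h4 := norm_nonneg (V:H₁)
    have : ‖(V:H₁)‖ = 0 := by linarith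
    exact norm_eq_zero.1 this
  rw [hUc] at hU0
  rw [hVc] at hV0
  exact Prod.ext (sub_eq_zero.1 hU0) (sub_eq_zero.1 hV0)
end

section
/- Let H₀, H₁ be Hilbert spaces, γ ∈ L(H₀) with Re γ ≥ c > 0, C : dom(C) ⊆ H₀ → H₁ densely defined, closed, injective and surjective. Let z ∈ ℂ \ {0}, δ > 0 with δ ≠ -z, and (u, v) ∈ dom(C) × dom(C*), (f, g) ∈ H₀ × H₁. Then (z + [[γ,0],[0,0]] + [[0,-C*],[C,0]])(u,v) = (f,g) if and only if, setting u_δ := (1 + δ/z)u, the pair (u_δ, v) satisfies (z + [[γ-δ, (γ-δ)δ C⁻¹],[0, δ]] + [[0,-C*],[C,0]])(u_δ, v) = (f + (γ-δ)(δ/z)C⁻¹ g, (1 + δ/z)g). -/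
/-- change-of-variables equivalence. For `Re γ ≥ c > 0`, `C` densely defined,
closed, injective and surjective with bounded inverse `Cinv`, `z ≠ 0`, `δ > 0`, `δ ≠ -z`:
`(z + [[γ,0],[0,0]] + [[0,-C*],[C,0]])(u,v) = (f,g)` iff, with `u_δ := (1 + δ/z) u`,
`(z + [[γ-δ, (γ-δ)δC⁻¹],[0,δ]] + [[0,-C*],[C,0]])(u_δ, v)
   = (f + (γ-δ)(δ/z)C⁻¹ g, (1 + δ/z) g)`. -/
theorem stmt9 {H₀ H₁ : Type*} [NormedAddCommGroup H₀] [InnerProductSpace ℂ H₀] [CompleteSpace H₀]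
    [NormedAddCommGroup H₁] [InnerProductSpace ℂ H₁] [CompleteSpace H₁]
    (γ : H₀ →L[ℂ] H₀) (c : ℝ) (hc : 0 < c)
    (hγ : ∀ x : H₀, c * ‖x‖ ^ 2 ≤ (inner ℂ (γ x) x : ℂ).re)
    (C : H₀ →ₗ.[ℂ] H₁) (hdense : Dense (C.domain : Set H₀)) (hclosed : C.IsClosed)
    (hinj : ∀ u : C.domain, C u = 0 → (u : H₀) = 0)
    (Cinv : H₁ →L[ℂ] H₀)
    (hCinv₁ : ∀ u : C.domain, Cinv (C u) = ↑u)
    (hCinv₂ : ∀ g : H₁, ∃ h : Cinv g ∈ C.domain, C ⟨Cinv g, h⟩ = g)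
    (z : ℂ) (hz : z ≠ 0) (δ : ℝ) (hδ : 0 < δ) (hδz : (δ : ℂ) ≠ -z)
    (u : C.domain) (v : C.adjoint.domain) (f : H₀) (g : H₁) :
    (z • (↑u : H₀) + γ ↑u - C.adjoint v = f ∧ z • (↑v : H₁) + C u = g) ↔
      (z • ((1 + (δ : ℂ) / z) • (↑u : H₀))
          + (γ ((1 + (δ : ℂ) / z) • (↑u : H₀)) - (δ : ℂ) • ((1 + (δ : ℂ) / z) • (↑u : H₀)))
          + (δ : ℂ) • (γ (Cinv ↑v) - (δ : ℂ) • Cinv ↑v)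
          - C.adjoint v
          = f + ((δ : ℂ) / z) • (γ (Cinv g) - (δ : ℂ) • Cinv g) ∧
        z • (↑v : H₁) + (δ : ℂ) • (↑v : H₁) + C ((1 + (δ : ℂ) / z) • u)
          = (1 + (δ : ℂ) / z) • g) := by
  have hzd : z + (δ : ℂ) ≠ 0 := by
    intro h
    exact hδz (by linear_combination h)
  have ha : (1 + (δ : ℂ) / z) ≠ 0 := by
    have : (1 + (δ : ℂ) / z) = (z + δ) / z := by field_simp
    rw [this]
    exact div_ne_zero hzd hz
  constructor
  · rintro ⟨h1, h2⟩
    have hCg : Cinv g = z • Cinv (↑v : H₁) + (↑u : H₀) := by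
      rw [← h2, map_add, map_smul, hCinv₁]
    constructor
    · rw [← h1, hCg]
      simp only [map_add, map_smul]
      match_scalars <;> field_simp <;> ring
    · rw [← h2, LinearPMap.map_smul]
      match_scalars <;> field_simp <;> ring
  · rintro ⟨h1, h2⟩
    have key : (1 + (δ : ℂ) / z) • (z • (↑v : H₁) + ↑(C u))
        = (1 + (δ : ℂ) / z) • g := by
      rw [← h2, LinearPMap.map_smul]
      match_scalars <;> field_simp <;> ring
    have h2' : z • (↑v : H₁) + ↑(C u) = g := smul_right_injective H₁ ha key
    have hCg : Cinv g = z • Cinv (↑v : H₁) + (↑u : H₀) := by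
      rw [← h2', map_add, map_smul, hCinv₁]
    refine ⟨?_, h2'⟩
    rw [hCg] at h1
    simp only [map_add, map_smul] at h1
    rw [eq_sub_of_add_eq h1.symm]
    match_scalars <;> field_simp <;> ring
end

section
/- Let H₀, H₁ be Hilbert spaces and C : dom(C) ⊆ H₀ → H₁ densely defined and closed. If the embedding of dom(C) ∩ ker(C)^⊥ (with the graph norm of C) into H₀ is compact, then ran(C) is closed in H₁. -/
open Filter Submodule

/-- if `C` is densely defined and closed and the embedding of
`dom C ∩ (ker C)ᗮ` (with the graph norm) into `H₀` is compact — here phrased sequentially: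
every graph-norm-bounded sequence in `dom C ∩ (ker C)ᗮ` has a subsequence converging in
`H₀` — then `ran C` is closed in `H₁`. -/
theorem stmt13 {H₀ H₁ : Type*} [NormedAddCommGroup H₀] [InnerProductSpace ℂ H₀] [CompleteSpace H₀]
    [NormedAddCommGroup H₁] [InnerProductSpace ℂ H₁] [CompleteSpace H₁]
    (C : H₀ →ₗ.[ℂ] H₁) (hdense : Dense (C.domain : Set H₀)) (hclosed : C.IsClosed)
    (hcompact : ∀ u : ℕ → C.domain,
      (∀ n, (↑(u n) : H₀) ∈ ((LinearMap.ker C.toFun).map C.domain.subtype)ᗮ) →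
      (∃ M : ℝ, ∀ n, ‖(↑(u n) : H₀)‖ + ‖C (u n)‖ ≤ M) →
      ∃ φ : ℕ → ℕ, StrictMono φ ∧ CauchySeq (fun n => (↑(u (φ n)) : H₀))) :
    IsClosed ((LinearMap.range C.toFun : Submodule ℂ H₁) : Set H₁) := by
  set K : Submodule ℂ H₀ := (LinearMap.ker C.toFun).map C.domain.subtype with hKdef
  -- membership facts about K
  have hKdom : ∀ x ∈ K, x ∈ C.domain := by
    rintro x ⟨⟨x', hx'⟩, _, rfl⟩; exact hx'
  have hKzero : ∀ (x : H₀) (hx : x ∈ C.domain), x ∈ K → C ⟨x, hx⟩ = 0 := by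
    rintro x hx ⟨⟨x', hx'⟩, hker, h⟩
    have : (⟨x, hx⟩ : C.domain) = ⟨x', hx'⟩ := Subtype.ext h.symm
    rw [this]
    exact hker
  have hKmem : ∀ (x : H₀) (hx : x ∈ C.domain), C ⟨x, hx⟩ = 0 → x ∈ K :=
    fun x hx h0 => ⟨⟨x, hx⟩, h0, rfl⟩
  -- from graph closedness: sequential limit lemma
  have hgraph : ∀ (u : ℕ → C.domain) (x : H₀) (y : H₁),
      Tendsto (fun n => ((u n : H₀))) atTop (nhds x) →
      Tendsto (fun n => C (u n)) atTop (nhds y) →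
      ∃ h : x ∈ C.domain, C ⟨x, h⟩ = y := by
    intro u x y hx hy
    have hmem : (x, y) ∈ C.graph := by
      have htend : Tendsto (fun n => ((u n : H₀), C (u n))) atTop (nhds (x, y)) :=
        hx.prodMk_nhds hy
      exact hclosed.mem_of_tendsto htend
        (Eventually.of_forall fun n => C.mem_graph (u n))
    rw [LinearPMap.mem_graph_iff] at hmem
    obtain ⟨⟨z, hz⟩, hz1, hz2⟩ := hmem
    simp only at hz1
    subst hz1
    exact ⟨hz, hz2⟩
  -- K is closed
  have hKclosed : IsClosed (K : Set H₀) := by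
    apply IsSeqClosed.isClosed
    intro u x hu hux
    have h : ∀ n, u n ∈ C.domain := fun n => hKdom _ (hu n)
    have h0 : ∀ n, C ⟨u n, h n⟩ = 0 := fun n => hKzero _ (h n) (hu n)
    obtain ⟨hx, hx0⟩ := hgraph (fun n => ⟨u n, h n⟩) x 0 hux
      (by simpa only [h0] using (tendsto_const_nhds : Tendsto (fun _ : ℕ => (0 : H₁)) atTop _))
    exact hKmem x hx hx0
  -- the closed range inequality
  have hineq : ∃ c : ℝ, 0 < c ∧ ∀ x : C.domain, (x : H₀) ∈ Kᗮ → ‖(x : H₀)‖ ≤ c * ‖C x‖ := by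
    by_contra hcon
    push_neg at hcon
    have hc' : ∀ n : ℕ, ∃ x : C.domain, (x : H₀) ∈ Kᗮ ∧ (n + 1 : ℝ) * ‖C x‖ < ‖(x : H₀)‖ := by
      intro n
      obtain ⟨x, hx1, hx2⟩ := hcon (n + 1) (by positivity)
      exact ⟨x, hx1, by linarith⟩
    choose v hv1 hv2 using hc'
    have hvpos : ∀ n, 0 < ‖(v n : H₀)‖ := by
      intro n
      nlinarith [hv2 n, norm_nonneg (C (v n)), (Nat.cast_nonneg n : (0:ℝ) ≤ n)]
    set u : ℕ → C.domain := fun n => ((‖(v n : H₀)‖⁻¹ : ℝ) : ℂ) • v n with hu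
    have hucoe : ∀ n, (u n : H₀) = ((‖(v n : H₀)‖⁻¹ : ℝ) : ℂ) • (v n : H₀) := fun n => rfl
    have hunorm : ∀ n, ‖(u n : H₀)‖ = 1 := by
      intro n
      rw [hucoe, norm_smul, Complex.norm_real, Real.norm_eq_abs, abs_inv, abs_norm,
        inv_mul_cancel₀ (hvpos n).ne']
    have hCu : ∀ n, C (u n) = ((‖(v n : H₀)‖⁻¹ : ℝ) : ℂ) • C (v n) := by
      intro n
      rw [hu]
      exact C.map_smul _ _
    have hCubound : ∀ n, ‖C (u n)‖ ≤ 1 / (n + 1 : ℝ) := by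
      intro n
      rw [hCu, norm_smul, Complex.norm_real, Real.norm_eq_abs, abs_inv, abs_norm]
      rw [div_eq_inv_mul, ← one_mul (‖(v n : H₀)‖⁻¹ * ‖C (v n)‖)]
      have h1 : ‖C (v n)‖ ≤ (n + 1 : ℝ)⁻¹ * ‖(v n : H₀)‖ := by
        rw [inv_mul_eq_div, le_div_iff₀ (by positivity)]
        nlinarith [hv2 n]
      calc 1 * (‖(v n : H₀)‖⁻¹ * ‖C (v n)‖) = ‖(v n : H₀)‖⁻¹ * ‖C (v n)‖ := one_mul _
        _ ≤ ‖(v n : H₀)‖⁻¹ * ((n + 1 : ℝ)⁻¹ * ‖(v n : H₀)‖) := by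
            apply mul_le_mul_of_nonneg_left h1 (by positivity)
        _ = (n + 1 : ℝ)⁻¹ * 1 := by field_simp [(hvpos n).ne']
        _ = (n + 1 : ℝ)⁻¹ * 1 := rfl
    have huorth : ∀ n, (u n : H₀) ∈ Kᗮ := by
      intro n
      rw [hucoe]
      exact Kᗮ.smul_mem _ (hv1 n)
    have hbound : ∃ M : ℝ, ∀ n, ‖(u n : H₀)‖ + ‖C (u n)‖ ≤ M := by
      refine ⟨2, fun n => ?_⟩
      have := hCubound n
      have h2 : (1 : ℝ) / (n + 1 : ℝ) ≤ 1 := by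
        rw [div_le_one (by positivity)]; linarith [(Nat.cast_nonneg n : (0:ℝ) ≤ n)]
      rw [hunorm]; linarith
    obtain ⟨φ, hφ, hcauchy⟩ := hcompact u huorth hbound
    obtain ⟨x, hx⟩ := cauchySeq_tendsto_of_complete hcauchy
    -- C (u (φ n)) → 0
    have hCu0 : Tendsto (fun n => C (u (φ n))) atTop (nhds 0) := by
      rw [tendsto_zero_iff_norm_tendsto_zero]
      apply squeeze_zero (fun n => norm_nonneg _) (fun n => hCubound (φ n))
      have h1 : Tendsto (fun n : ℕ => 1 / ((n : ℝ) + 1)) atTop (nhds 0) :=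
        tendsto_one_div_add_atTop_nhds_zero_nat
      exact h1.comp hφ.tendsto_atTop
    obtain ⟨hxd, hx0⟩ := hgraph (fun n => u (φ n)) x 0 hx hCu0
    have hxK : x ∈ K := hKmem x hxd hx0
    have hxKo : x ∈ Kᗮ :=
      (K.isClosed_orthogonal.mem_of_tendsto hx
        (Eventually.of_forall fun n => huorth (φ n)) : x ∈ Kᗮ)
    have hx0' : x = 0 := by
      have := (Submodule.mem_orthogonal K x).1 hxKo x hxK
      exact inner_self_eq_zero.mp this
    have hxnorm : ‖x‖ = 1 := by
      have : Tendsto (fun n => ‖(u (φ n) : H₀)‖) atTop (nhds ‖x‖) := hx.norm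
      have h1 : Tendsto (fun _ : ℕ => (1 : ℝ)) atTop (nhds ‖x‖) := by
        simpa only [hunorm] using this
      exact tendsto_nhds_unique h1 tendsto_const_nhds |>.symm ▸ rfl
    rw [hx0', norm_zero] at hxnorm
    norm_num at hxnorm
  obtain ⟨c, hc0, hcineq⟩ := hineq
  -- K has orthogonal projection
  haveI : CompleteSpace K := hKclosed.completeSpace_coe
  -- main argument
  apply IsSeqClosed.isClosed
  intro yseq y hyseq hylim
  have h' : ∀ n, ∃ z : C.domain, C z = yseq n := fun n => hyseq n
  choose w hw using h'
  have hPdom : ∀ n, (↑(orthogonalProjection K (w n : H₀)) : H₀) ∈ C.domain :=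
    fun n => hKdom _ (orthogonalProjection K (w n : H₀)).2
  set p : ℕ → C.domain := fun n => w n - ⟨_, hPdom n⟩ with hp
  have hpcoe : ∀ n, (p n : H₀) = (w n : H₀) - orthogonalProjection K (w n : H₀) :=
    fun n => rfl
  have hporth : ∀ n, (p n : H₀) ∈ Kᗮ := by
    intro n
    rw [hpcoe]
    exact K.sub_starProjection_mem_orthogonal _
  have hCp : ∀ n, C (p n) = yseq n := by
    intro n
    rw [hp]
    simp only []
    rw [C.map_sub, hKzero _ (hPdom n) (orthogonalProjection K (w n : H₀)).2, hw, sub_zero]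
  -- p is Cauchy
  have hkey : ∀ n m, ‖(p n : H₀) - (p m : H₀)‖ ≤ c * ‖yseq n - yseq m‖ := by
    intro n m
    have hmem : ((p n - p m : C.domain) : H₀) ∈ Kᗮ := by
      have : ((p n - p m : C.domain) : H₀) = (p n : H₀) - (p m : H₀) := rfl
      rw [this]
      exact Kᗮ.sub_mem (hporth n) (hporth m)
    have := hcineq (p n - p m) hmem
    rwa [C.map_sub, hCp, hCp] at this
  have hycauchy : CauchySeq yseq := hylim.cauchySeq
  have hpcauchy : CauchySeq (fun n => (p n : H₀)) := by
    rw [Metric.cauchySeq_iff] at hycauchy ⊢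
    intro ε hε
    obtain ⟨N, hN⟩ := hycauchy (ε / c) (by positivity)
    refine ⟨N, fun n hn m hm => ?_⟩
    have h1 := hN n hn m hm
    rw [dist_eq_norm] at h1 ⊢
    calc ‖(p n : H₀) - (p m : H₀)‖ ≤ c * ‖yseq n - yseq m‖ := hkey n m
      _ < c * (ε / c) := by
          apply mul_lt_mul_of_pos_left h1 hc0
      _ = ε := by field_simp
  obtain ⟨x, hx⟩ := cauchySeq_tendsto_of_complete hpcauchy
  obtain ⟨hxd, hxeq⟩ := hgraph p x y hx (by simpa only [hCp] using hylim)
  exact ⟨⟨x, hxd⟩, hxeq⟩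
end

section
/- Let H₀, H₁ be Hilbert spaces, α ∈ L(H₀), β ∈ L(H₁) selfadjoint with α, β ≥ c > 0, γ ∈ L(H₀) with Re γ ≥ c, and C : dom(C) ⊆ H₀ → H₁ densely defined, closed, with closed range. Then there exists δ > 0 such that every classical solution U ∈ C¹([0,∞); H₀ × H₁) ∩ C([0,∞); dom(C) × dom(C*)) of (diag(α, β) U)'(t) = ([[−γ, 0],[0, 0]] + [[0, C*],[−C, 0]]) U(t) with U(0) = (u₀, v₀), u₀ ∈ dom(C), v₀ ∈ dom(C*) ∩ β⁻¹ ran(C), satisfies ‖U(t)‖ ≤ M e^{-δ t} ‖(u₀, v₀)‖ for some constant M ≥ 1 independent of the initial data. -/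
open Set Filter

lemma stmt18_inv {H : Type*} [NormedAddCommGroup H] [InnerProductSpace ℂ H] [CompleteSpace H]
    (α : H →L[ℂ] H) (c : ℝ) (hc : 0 < c) (hα : IsSelfAdjoint α)
    (hαc : ∀ x : H, c * ‖x‖ ^ 2 ≤ (inner ℂ (α x) x : ℂ).re) :
    ∃ A : H →L[ℂ] H, (∀ x, A (α x) = x) ∧ (∀ x, α (A x) = x) := by
  have hlow : ∀ x : H, c * ‖x‖ ≤ ‖α x‖ := by
    intro x
    rcases eq_or_ne x 0 with rfl | hx
    · simp
    have h1 : c * ‖x‖ ^ 2 ≤ ‖α x‖ * ‖x‖ := by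
      refine (hαc x).trans ?_
      calc (inner ℂ (α x) x : ℂ).re ≤ ‖(inner ℂ (α x) x : ℂ)‖ := Complex.re_le_norm _
        _ ≤ ‖α x‖ * ‖x‖ := norm_inner_le_norm _ _
    have hx' : 0 < ‖x‖ := norm_pos_iff.mpr hx
    exact (mul_le_mul_iff_left₀ hx').mp (by nlinarith : c * ‖x‖ * ‖x‖ ≤ ‖α x‖ * ‖x‖)
  have hinj : LinearMap.ker (α : H →ₗ[ℂ] H) = ⊥ := by
    rw [LinearMap.ker_eq_bot']
    intro x hx
    have := hlow x
    rw [show α x = 0 from hx, norm_zero] at this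
    have : ‖x‖ ≤ 0 := by nlinarith
    exact norm_le_zero_iff.mp this
  have hanti : AntilipschitzWith (⟨c, hc.le⟩ : NNReal)⁻¹ α :=
    α.antilipschitz_of_bound (fun x => by
      show ‖x‖ ≤ c⁻¹ * ‖α x‖
      rw [le_inv_mul_iff₀ hc]
      exact hlow x)
  have hclosedR : IsClosed (LinearMap.range (α : H →ₗ[ℂ] H) : Set H) := by
    have := hanti.isClosed_range α.uniformContinuous
    rwa [show Set.range α = (LinearMap.range (α : H →ₗ[ℂ] H) : Set H) by
      ext y; simp [LinearMap.mem_range]] at this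
  have : CompleteSpace (LinearMap.range (α : H →ₗ[ℂ] H)) := hclosedR.completeSpace_coe
  have hsurj : LinearMap.range (α : H →ₗ[ℂ] H) = ⊤ := by
    rw [← Submodule.orthogonal_eq_bot_iff]
    rw [Submodule.eq_bot_iff]
    intro y hy
    have h0 : (inner ℂ (α y) y : ℂ) = 0 := by
      exact (Submodule.mem_orthogonal _ _).mp hy (α y) (LinearMap.mem_range_self _ y)
    have := hαc y
    rw [h0] at this
    simp only [Complex.zero_re] at this
    have : ‖y‖ ^ 2 ≤ 0 := by nlinarith
    have : ‖y‖ = 0 := by nlinarith [sq_nonneg ‖y‖, norm_nonneg y]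
    exact norm_eq_zero.mp this
  set e := ContinuousLinearEquiv.ofBijective α hinj hsurj with he
  refine ⟨(e.symm : H →L[ℂ] H), fun x => ?_, fun x => ?_⟩
  · exact ContinuousLinearEquiv.ofBijective_symm_apply_apply α hinj hsurj x
  · exact ContinuousLinearEquiv.ofBijective_apply_symm_apply α hinj hsurj x

lemma stmt18_rinv {H₀ H₁ : Type*} [NormedAddCommGroup H₀] [InnerProductSpace ℂ H₀] [CompleteSpace H₀]
    [NormedAddCommGroup H₁] [InnerProductSpace ℂ H₁] [CompleteSpace H₁]
    (C : H₀ →ₗ.[ℂ] H₁) (hclosed : C.IsClosed)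
    (hran : IsClosed ((LinearMap.range C.toFun : Submodule ℂ H₁) : Set H₁)) :
    ∃ G : H₁ →L[ℂ] H₀,
      (∀ y ∈ LinearMap.range C.toFun, (G y, y) ∈ C.graph) ∧
      (∀ x : C.domain, ‖G (C x)‖ ≤ ‖(x : H₀)‖) := by
  classical
  set R : Submodule ℂ H₁ := LinearMap.range C.toFun with hR
  have : CompleteSpace R := hran.completeSpace_coe
  set N : Submodule ℂ H₀ := Submodule.comap (LinearMap.inl ℂ H₀ H₁) C.graph with hN
  have hmemN : ∀ x : H₀, x ∈ N ↔ (x, (0 : H₁)) ∈ C.graph := by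
    intro x
    simp [hN, Submodule.mem_comap]
  have hNclosed : IsClosed (N : Set H₀) := by
    have : (N : Set H₀) = (fun x : H₀ => (x, (0 : H₁))) ⁻¹' (C.graph : Set (H₀ × H₁)) := by
      ext x; simp [hmemN x]
    rw [this]
    exact hclosed.preimage (continuous_id.prodMk continuous_const)
  have : CompleteSpace N := hNclosed.completeSpace_coe
  have huniq : ∀ (y : H₁) (x x' : H₀), x ∈ Nᗮ → (x, y) ∈ C.graph →
      x' ∈ Nᗮ → (x', y) ∈ C.graph → x = x' := by
    intro y x x' hx hxg hx' hxg'
    have hd : (x - x', y - y) ∈ C.graph := Submodule.sub_mem _ hxg hxg'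
    rw [sub_self] at hd
    have hdN : x - x' ∈ N := (hmemN _).mpr hd
    have hdO : x - x' ∈ Nᗮ := Submodule.sub_mem _ hx hx'
    have h0 : inner (𝕜 := ℂ) (x - x') (x - x') = (0 : ℂ) :=
      (Submodule.mem_orthogonal _ _).mp hdO (x - x') hdN
    have := inner_self_eq_zero (𝕜 := ℂ).mp h0
    exact sub_eq_zero.mp this
  have hex : ∀ y : R, ∃ x : H₀, x ∈ Nᗮ ∧ (x, (y : H₁)) ∈ C.graph := by
    rintro ⟨y, hy⟩
    obtain ⟨x₀, hx₀⟩ := hy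
    refine ⟨(x₀ : H₀) - (Submodule.orthogonalProjectionOnto N (x₀ : H₀) : H₀),
      Submodule.sub_starProjection_mem_orthogonal _, ?_⟩
    have h1 : ((x₀ : H₀), y) ∈ C.graph := by
      have := C.mem_graph x₀
      rwa [show C x₀ = y from by rw [← C.toFun_eq_coe, hx₀]] at this
    have h2 : ((Submodule.orthogonalProjectionOnto N (x₀ : H₀) : H₀), (0 : H₁)) ∈ C.graph :=
      (hmemN _).mp (Submodule.orthogonalProjectionOnto N (x₀ : H₀)).2
    have := Submodule.sub_mem _ h1 h2
    simpa using this
  choose ψ hψO hψg using hex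
  have hψadd : ∀ y z : R, ψ (y + z) = ψ y + ψ z := by
    intro y z
    refine huniq ((y : H₁) + z) _ _ (hψO (y + z)) (by simpa using hψg (y + z))
      (Submodule.add_mem _ (hψO y) (hψO z)) (Submodule.add_mem _ (hψg y) (hψg z))
  have hψsmul : ∀ (a : ℂ) (y : R), ψ (a • y) = a • ψ y := by
    intro a y
    refine huniq (a • (y : H₁)) _ _ (hψO (a • y)) (by simpa using hψg (a • y))
      (Submodule.smul_mem _ a (hψO y)) ?_
    have := Submodule.smul_mem _ a (hψg y)
    simpa using this
  set ψL : R →ₗ[ℂ] H₀ :=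
    { toFun := ψ, map_add' := hψadd, map_smul' := hψsmul } with hψL
  have hψcont : Continuous ψL := by
    apply LinearMap.continuous_of_seq_closed_graph
    intro u x y hu hy
    have hyO : y ∈ Nᗮ :=
      N.isClosed_orthogonal.mem_of_tendsto hy (Filter.Eventually.of_forall fun n => hψO (u n))
    have hcoe : Filter.Tendsto (fun n => ((u n : H₁))) Filter.atTop (nhds (x : H₁)) :=
      (continuous_subtype_val.tendsto x).comp hu
    have hyg : (y, (x : H₁)) ∈ C.graph := by
      have hgc : IsClosed (C.graph : Set (H₀ × H₁)) := hclosed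
      exact hgc.mem_of_tendsto (hy.prodMk_nhds hcoe)
        (Filter.Eventually.of_forall fun n => hψg (u n))
    exact (huniq _ _ _ hyO hyg (hψO x) (hψg x))
  set ψC : R →L[ℂ] H₀ := ⟨ψL, hψcont⟩ with hψC
  refine ⟨ψC.comp (Submodule.orthogonalProjectionOnto R), ?_, ?_⟩
  · intro y hy
    have hproj : Submodule.orthogonalProjectionOnto R y = ⟨y, hy⟩ :=
      Subtype.ext (Submodule.starProjection_eq_self_iff.mpr hy)
    show ((ψC (Submodule.orthogonalProjectionOnto R y) : H₀), y) ∈ C.graph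
    rw [hproj]
    exact hψg ⟨y, hy⟩
  · intro x
    have hy : C x ∈ R := ⟨x, C.toFun_eq_coe x⟩
    have hproj : Submodule.orthogonalProjectionOnto R (C x) = ⟨C x, hy⟩ :=
      Subtype.ext (Submodule.starProjection_eq_self_iff.mpr hy)
    have heq : ψ ⟨C x, hy⟩ = (x : H₀) - (Submodule.orthogonalProjectionOnto N (x : H₀) : H₀) := by
      refine huniq (C x) _ _ (hψO _) (hψg _) (Submodule.sub_starProjection_mem_orthogonal _) ?_
      have h1 : ((x : H₀), C x) ∈ C.graph := C.mem_graph x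
      have h2 : ((Submodule.orthogonalProjectionOnto N (x : H₀) : H₀), (0 : H₁)) ∈ C.graph :=
        (hmemN _).mp (Submodule.orthogonalProjectionOnto N (x : H₀)).2
      simpa using Submodule.sub_mem _ h1 h2
    show ‖(ψC (Submodule.orthogonalProjectionOnto R (C x)) : H₀)‖ ≤ ‖(x : H₀)‖
    rw [hproj]
    show ‖ψ ⟨C x, hy⟩‖ ≤ ‖(x : H₀)‖
    rw [heq]
    set p : H₀ := (Submodule.orthogonalProjectionOnto N (x : H₀) : H₀) with hp
    have horth : inner (𝕜 := ℂ) ((x : H₀) - p) p = 0 :=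
      (Submodule.mem_orthogonal' _ _).mp (Submodule.sub_starProjection_mem_orthogonal (K := N) (x : H₀))
        p ((Submodule.orthogonalProjectionOnto N (x : H₀)).2)
    have hpyth := norm_add_sq_eq_norm_sq_add_norm_sq_of_inner_eq_zero _ _ horth
    rw [sub_add_cancel] at hpyth
    nlinarith [norm_nonneg ((x : H₀) - p), norm_nonneg (x : H₀), mul_self_nonneg ‖p‖]

lemma stmt18_invariant {H : Type*} [NormedAddCommGroup H] [InnerProductSpace ℂ H] [CompleteSpace H]
    (S : Submodule ℂ H) (hS : IsClosed (S : Set H)) (f g : ℝ → H)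
    (hf : ∀ t : ℝ, 0 ≤ t → HasDerivWithinAt f (g t) (Ici 0) t)
    (hg : ∀ t : ℝ, 0 ≤ t → g t ∈ S) (h0 : f 0 ∈ S) :
    ∀ t : ℝ, 0 ≤ t → f t ∈ S := by
  have : CompleteSpace S := hS.completeSpace_coe
  set P : H →L[ℂ] H := S.subtypeL.comp (Submodule.orthogonalProjectionOnto S) with hP
  have hPid : ∀ x ∈ S, P x = x := fun x hx => Submodule.starProjection_eq_self_iff.mpr hx
  have hPmem : ∀ x : H, P x ∈ S := fun x => (Submodule.orthogonalProjectionOnto S x).2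
  intro t ht
  set F : ℝ → H := fun s => f s - P (f s) with hF
  have hFd : ∀ s : ℝ, 0 ≤ s → HasDerivWithinAt F 0 (Ici 0) s := by
    intro s hs
    have h1 : HasDerivWithinAt (fun τ => P (f τ)) (P (g s)) (Ici 0) s :=
      ((P.restrictScalars ℝ).hasFDerivAt).comp_hasDerivWithinAt s (hf s hs)
    have := (hf s hs).sub h1
    rwa [hPid _ (hg s hs), sub_self] at this
  have hcont : ContinuousOn F (Icc 0 t) := by
    intro s hs
    exact ((hFd s hs.1).continuousWithinAt).mono (fun y hy => hy.1)
  have hconst := constant_of_has_deriv_right_zero hcont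
    (fun s hs => (hFd s hs.1).mono (Ici_subset_Ici.mpr hs.1)) t (mem_Icc.mpr ⟨ht, le_refl t⟩)
  have hF0 : F 0 = 0 := by
    simp only [hF]
    rw [hPid _ h0, sub_self]
  rw [hF0] at hconst
  have hft : f t = P (f t) := sub_eq_zero.mp hconst
  rw [hft]
  exact hPmem (f t)

lemma stmt18_gronwall (F F' : ℝ → ℝ) (k : ℝ)
    (hF : ∀ t : ℝ, 0 ≤ t → HasDerivWithinAt F (F' t) (Ici 0) t)
    (hle : ∀ t : ℝ, 0 ≤ t → F' t ≤ -k * F t) :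
    ∀ t : ℝ, 0 ≤ t → F t ≤ F 0 * Real.exp (-k * t) := by
  set G : ℝ → ℝ := fun t => F t * Real.exp (k * t) with hG
  have hGd : ∀ t : ℝ, 0 ≤ t →
      HasDerivWithinAt G (F' t * Real.exp (k * t) + F t * (k * Real.exp (k * t))) (Ici 0) t := by
    intro t ht
    have he : HasDerivWithinAt (fun s => Real.exp (k * s)) (k * Real.exp (k * t)) (Ici 0) t := by
      have h1 : HasDerivAt (fun s : ℝ => k * s) k t := by
        simpa using (hasDerivAt_id t).const_mul k
      have := (Real.hasDerivAt_exp (k * t)).comp t h1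
      rw [mul_comm] at this
      exact this.hasDerivWithinAt
    exact (hF t ht).mul he
  have hanti : AntitoneOn G (Ici 0) := by
    apply antitoneOn_of_deriv_nonpos (convex_Ici 0)
    · intro s hs
      exact ((hGd s hs).continuousWithinAt)
    · intro s hs
      rw [interior_Ici] at hs
      exact ((hGd s (le_of_lt hs)).hasDerivAt
        (Ici_mem_nhds hs)).differentiableAt.differentiableWithinAt
    · intro s hs
      rw [interior_Ici] at hs
      have hds := ((hGd s (le_of_lt hs)).hasDerivAt (Ici_mem_nhds hs)).deriv
      rw [hds]
      nlinarith [Real.exp_pos (k * s), hle s (le_of_lt hs)]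
  intro t ht
  have := hanti (self_mem_Ici) ht ht
  have hG0 : G 0 = F 0 := by simp [hG]
  rw [hG0] at this
  have hexp : 0 < Real.exp (k * t) := Real.exp_pos _
  rw [hG] at this
  simp only at this
  rw [neg_mul, Real.exp_neg, ← div_eq_mul_inv]
  exact (le_div_iff₀ hexp).mpr this

lemma stmt18_reInner {H : Type*} [NormedAddCommGroup H] [InnerProductSpace ℂ H]
    (f g : ℝ → H) (f' g' : H) (s : Set ℝ) (x : ℝ)
    (hf : HasDerivWithinAt f f' s x) (hg : HasDerivWithinAt g g' s x) :
    HasDerivWithinAt (fun t => (inner ℂ (f t) (g t) : ℂ).re)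
      ((inner ℂ (f x) g' : ℂ).re + (inner ℂ f' (g x) : ℂ).re) s x := by
  have h := hf.inner ℂ hg
  have h2 := (Complex.reCLM.hasFDerivAt).comp_hasDerivWithinAt x h
  simpa [Function.comp_def] using h2

lemma stmt18_graph_fact {H₀ H₁ : Type*} [NormedAddCommGroup H₀] [InnerProductSpace ℂ H₀]
    [NormedAddCommGroup H₁] [InnerProductSpace ℂ H₁]
    (C : H₀ →ₗ.[ℂ] H₁) {x : H₀} {y : H₁} (h : (x, y) ∈ C.graph) :
    ∃ hx : x ∈ C.domain, C ⟨x, hx⟩ = y := by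
  obtain ⟨z, hz1, hz2⟩ := C.mem_graph_iff.mp h
  have hz1' : (z : H₀) = x := hz1
  have hx : x ∈ C.domain := hz1' ▸ z.2
  refine ⟨hx, ?_⟩
  rw [show (⟨x, hx⟩ : C.domain) = z from Subtype.ext hz1'.symm]
  exact hz2

lemma stmt18_re_le {H : Type*} [NormedAddCommGroup H] [InnerProductSpace ℂ H] (x y : H) :
    |(inner ℂ x y : ℂ).re| ≤ ‖x‖ * ‖y‖ := by
  have h := norm_inner_le_norm (𝕜 := ℂ) x y
  exact (Complex.abs_re_le_norm _).trans h


lemma stmt18_re_symm {H : Type*} [NormedAddCommGroup H] [InnerProductSpace ℂ H] (x y : H) :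
    (inner ℂ x y : ℂ).re = (inner ℂ y x : ℂ).re := by
  have h := inner_re_symm (𝕜 := ℂ) x y
  simpa using h


lemma stmt18_key_arith (ε c nα g2 nγK a b X Y Z R : ℝ)
    (hε0 : 0 ≤ ε)
    (hb1 : -X ≤ nα * (a * a)) (hb2 : Y ≤ nγK * (a * b)) (hb3 : c * b ^ 2 ≤ Z)
    (hb4 : c * a ^ 2 ≤ R)
    (hAM : 2 * nγK * (a * b) ≤ g2 * a ^ 2 + c * b ^ 2)
    (hε1 : ε * (2 * nα + g2) ≤ c) (hεc : ε * c ≤ c) :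
    -(2 * R) - ε * (2 * (X - Y + Z)) ≤ -(ε * c) * (a ^ 2 + b ^ 2) := by
  nlinarith [mul_le_mul_of_nonneg_left hb1 hε0, mul_le_mul_of_nonneg_left hb2 hε0,
    mul_le_mul_of_nonneg_left hb3 hε0, mul_le_mul_of_nonneg_left hAM hε0,
    mul_le_mul_of_nonneg_right hε1 (sq_nonneg a), mul_le_mul_of_nonneg_right hεc (sq_nonneg a)]

lemma stmt18_fin_arith (k L S P Fs εc : ℝ) (hk : 0 ≤ k) (hkL : k * L = εc)
    (hP : P ≤ -εc * S) (hF : Fs ≤ L * S) : P ≤ -k * Fs := by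
  have h1 : k * Fs ≤ k * (L * S) := mul_le_mul_of_nonneg_left hF hk
  have h2 : k * (L * S) = εc * S := by rw [← hkL]; ring
  linarith

lemma stmt18_negle {X p M : ℝ} (h1 : -p ≤ X) (h2 : p ≤ M) : -X ≤ M := by linarith


set_option maxHeartbeats 1000000 in
/-- main exponential stability theorem: for `α, β` selfadjoint `≥ c > 0`,
`Re γ ≥ c`, and `C` densely defined, closed with closed range, there are `δ > 0` and
`M ≥ 1` such that every classical solution `U` of
`(diag(α,β) U)' = (-γ U₁ + C* U₂, -C U₁)` on `[0,∞)` with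
`U(0) ∈ dom C × (dom C* ∩ β⁻¹ ran C)` satisfies `‖U(t)‖ ≤ M e^{-δt} ‖U(0)‖`. -/
theorem stmt18 {H₀ H₁ : Type*} [NormedAddCommGroup H₀] [InnerProductSpace ℂ H₀] [CompleteSpace H₀]
    [NormedAddCommGroup H₁] [InnerProductSpace ℂ H₁] [CompleteSpace H₁]
    (α : H₀ →L[ℂ] H₀) (β : H₁ →L[ℂ] H₁) (γ : H₀ →L[ℂ] H₀) (c : ℝ) (hc : 0 < c)
    (hα : IsSelfAdjoint α) (hβ : IsSelfAdjoint β)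
    (hαc : ∀ x : H₀, c * ‖x‖ ^ 2 ≤ (inner ℂ (α x) x : ℂ).re)
    (hβc : ∀ x : H₁, c * ‖x‖ ^ 2 ≤ (inner ℂ (β x) x : ℂ).re)
    (hγ : ∀ x : H₀, c * ‖x‖ ^ 2 ≤ (inner ℂ (γ x) x : ℂ).re)
    (C : H₀ →ₗ.[ℂ] H₁) (hdense : Dense (C.domain : Set H₀)) (hclosed : C.IsClosed)
    (hran : IsClosed ((LinearMap.range C.toFun : Submodule ℂ H₁) : Set H₁)) :
    ∃ δ > (0 : ℝ), ∃ M : ℝ, 1 ≤ M ∧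
      ∀ U : ℝ → H₀ × H₁,
        ContinuousOn U (Set.Ici 0) →
        (∀ t : ℝ, 0 ≤ t →
          ∃ (h₁ : (U t).1 ∈ C.domain) (h₂ : (U t).2 ∈ C.adjoint.domain),
            HasDerivWithinAt (fun s : ℝ => (α (U s).1, β (U s).2))
              (-(γ (U t).1) + C.adjoint ⟨(U t).2, h₂⟩, -(C ⟨(U t).1, h₁⟩))
              (Set.Ici 0) t) →
        β (U 0).2 ∈ LinearMap.range C.toFun →
        ∀ t : ℝ, 0 ≤ t → ‖U t‖ ≤ M * Real.exp (-δ * t) * ‖U 0‖ := by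
  classical
  obtain ⟨A, hAα, hαA⟩ := stmt18_inv α c hc hα hαc
  obtain ⟨B, hBβ, hβB⟩ := stmt18_inv β c hc hβ hβc
  obtain ⟨G, hG1, hG2⟩ := stmt18_rinv C hclosed hran
  -- symmetry facts
  have hαsym : ∀ x y : H₀, (inner ℂ (α x) y : ℂ) = inner ℂ x (α y) := by
    intro x y
    conv_lhs => rw [← hα.adjoint_eq]
    exact ContinuousLinearMap.adjoint_inner_left α y x
  have hβsym : ∀ x y : H₁, (inner ℂ (β x) y : ℂ) = inner ℂ x (β y) := by
    intro x y
    conv_lhs => rw [← hβ.adjoint_eq]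
    exact ContinuousLinearMap.adjoint_inner_left β y x
  have hadj : ∀ (x : C.adjoint.domain) (y : C.domain),
      (inner ℂ (C.adjoint x) (y : H₀) : ℂ) = inner ℂ (x : H₁) (C y) :=
    LinearPMap.adjoint_isFormalAdjoint hdense
  -- constants
  set K : ℝ := ‖G‖ * ‖β‖ with hKdef
  have hK0 : 0 ≤ K := mul_nonneg (norm_nonneg _) (norm_nonneg _)
  set g2 : ℝ := ‖γ‖ ^ 2 * K ^ 2 / c with hg2def
  have hg20 : 0 ≤ g2 := by positivity
  set D : ℝ := 2 * ‖α‖ + g2 + 2 * ‖α‖ * K + 2 + c with hDdef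
  have hD0 : 0 < D := by positivity
  set ε : ℝ := c / D with hεdef
  have hε0 : 0 < ε := div_pos hc hD0
  have hεD : ∀ X : ℝ, 0 ≤ X → X ≤ D → ε * X ≤ c := by
    intro X hX0 hXD
    rw [hεdef, div_mul_eq_mul_div, div_le_iff₀ hD0]
    exact mul_le_mul_of_nonneg_left hXD hc.le
  have hε1 : ε * (2 * ‖α‖ + g2) ≤ c := hεD _ (by positivity) (by rw [hDdef]; nlinarith [norm_nonneg α, hK0])
  have hε2 : ε * (2 * ‖α‖ * K) ≤ c := hεD _ (by positivity) (by rw [hDdef]; nlinarith [norm_nonneg α, hg20, hc])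
  have hεle1 : ε ≤ 1 := by
    rw [hεdef, div_le_one hD0, hDdef]
    nlinarith [norm_nonneg α, hg20, hK0]
  have hgc : g2 * c = ‖γ‖ ^ 2 * K ^ 2 := by
    rw [hg2def]; field_simp
  have hεc : ε * c ≤ c :=
    (mul_le_mul_of_nonneg_right hεle1 hc.le).trans_eq (one_mul c)
  set L : ℝ := ‖α‖ + ‖β‖ + c / 2 with hLdef
  have hL0 : 0 < L := by positivity
  set k : ℝ := ε * c / L with hkdef
  have hk0 : 0 < k := by positivity
  have hkL : k * L = ε * c := by
    rw [hkdef]; field_simp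
  refine ⟨k / 2, by positivity, max 1 (Real.sqrt (4 * L / c)), le_max_left _ _, ?_⟩
  intro U hUcont hU hU0 t ht
  choose h₁ h₂ hder using hU
  set u : ℝ → H₀ := fun s => (U s).1 with hu_def
  set v : ℝ → H₁ := fun s => (U s).2 with hv_def
  set Dp : ℝ → H₀ :=
    fun s => if hs : 0 ≤ s then -(γ (u s)) + C.adjoint ⟨v s, h₂ s hs⟩ else 0 with hDp
  set Dq : ℝ → H₁ := fun s => if hs : 0 ≤ s then -(C ⟨u s, h₁ s hs⟩) else 0 with hDq
  have hDps : ∀ s (hs : 0 ≤ s), Dp s = -(γ (u s)) + C.adjoint ⟨v s, h₂ s hs⟩ := by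
    intro s hs; rw [hDp]; simp only [dif_pos hs]
  have hDqs : ∀ s (hs : 0 ≤ s), Dq s = -(C ⟨u s, h₁ s hs⟩) := by
    intro s hs; rw [hDq]; simp only [dif_pos hs]
  have hpq : ∀ s, 0 ≤ s →
      HasDerivWithinAt (fun τ => (α (u τ), β (v τ))) (Dp s, Dq s) (Set.Ici 0) s := by
    intro s hs
    rw [hDps s hs, hDqs s hs]
    exact hder s hs
  have hp : ∀ s, 0 ≤ s → HasDerivWithinAt (fun τ => α (u τ)) (Dp s) (Set.Ici 0) s := by
    intro s hs
    have := ((ContinuousLinearMap.fst ℝ H₀ H₁).hasFDerivAt).comp_hasDerivWithinAt s (hpq s hs)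
    simpa [Function.comp_def] using this
  have hq : ∀ s, 0 ≤ s → HasDerivWithinAt (fun τ => β (v τ)) (Dq s) (Set.Ici 0) s := by
    intro s hs
    have := ((ContinuousLinearMap.snd ℝ H₀ H₁).hasFDerivAt).comp_hasDerivWithinAt s (hpq s hs)
    simpa [Function.comp_def] using this
  have hu' : ∀ s, 0 ≤ s → HasDerivWithinAt u (A (Dp s)) (Set.Ici 0) s := by
    intro s hs
    have h1 := ((A.restrictScalars ℝ).hasFDerivAt).comp_hasDerivWithinAt s (hp s hs)
    have h2 : (fun τ => A (α (u τ))) = u := funext fun τ => hAα (u τ)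
    rw [show (⇑(A.restrictScalars ℝ) ∘ fun τ => α (u τ)) = fun τ => A (α (u τ)) from rfl, h2] at h1
    exact h1
  have hv' : ∀ s, 0 ≤ s → HasDerivWithinAt v (B (Dq s)) (Set.Ici 0) s := by
    intro s hs
    have h1 := ((B.restrictScalars ℝ).hasFDerivAt).comp_hasDerivWithinAt s (hq s hs)
    have h2 : (fun τ => B (β (v τ))) = v := funext fun τ => hBβ (v τ)
    rw [show (⇑(B.restrictScalars ℝ) ∘ fun τ => β (v τ)) = fun τ => B (β (v τ)) from rfl, h2] at h1
    exact h1
  -- q stays in the range of C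
  have hDqR : ∀ s, 0 ≤ s → Dq s ∈ LinearMap.range C.toFun := by
    intro s hs
    rw [hDqs s hs]
    exact Submodule.neg_mem _ ⟨⟨u s, h₁ s hs⟩, rfl⟩
  have hqR : ∀ s, 0 ≤ s → β (v s) ∈ LinearMap.range C.toFun :=
    stmt18_invariant _ hran (fun τ => β (v τ)) Dq hq hDqR hU0
  -- the auxiliary function w
  set w : ℝ → H₀ := fun s => G (β (v s)) with hw_def
  have hwgraph : ∀ s (hs : 0 ≤ s), (w s, β (v s)) ∈ C.graph := fun s hs => hG1 _ (hqR s hs)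
  have hw' : ∀ s, 0 ≤ s → HasDerivWithinAt w (G (Dq s)) (Set.Ici 0) s := by
    intro s hs
    have := ((G.restrictScalars ℝ).hasFDerivAt).comp_hasDerivWithinAt s (hq s hs)
    simpa [Function.comp_def] using this
  have hw'graph : ∀ s (hs : 0 ≤ s), (G (Dq s), Dq s) ∈ C.graph := fun s hs => hG1 _ (hDqR s hs)
  have hw'norm : ∀ s (hs : 0 ≤ s), ‖G (Dq s)‖ ≤ ‖u s‖ := by
    intro s hs
    rw [hDqs s hs, map_neg, norm_neg]
    exact hG2 ⟨u s, h₁ s hs⟩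
  have hwnorm : ∀ s, ‖w s‖ ≤ K * ‖v s‖ := by
    intro s
    calc ‖G (β (v s))‖ ≤ ‖G‖ * ‖β (v s)‖ := G.le_opNorm _
      _ ≤ ‖G‖ * (‖β‖ * ‖v s‖) :=
        mul_le_mul_of_nonneg_left (β.le_opNorm _) (norm_nonneg G)
      _ = K * ‖v s‖ := by rw [hKdef]; ring
  -- energy functionals
  set E : ℝ → ℝ :=
    fun s => (inner ℂ (α (u s)) (u s) : ℂ).re + (inner ℂ (β (v s)) (v s) : ℂ).re with hEdef
  set W : ℝ → ℝ := fun s => (inner ℂ (α (u s)) (w s) : ℂ).re with hWdef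
  set F : ℝ → ℝ := fun s => E s - ε * (2 * W s) with hFdef
  set E' : ℝ → ℝ := fun s =>
    ((inner ℂ (α (u s)) (A (Dp s)) : ℂ).re + (inner ℂ (Dp s) (u s) : ℂ).re) +
    ((inner ℂ (β (v s)) (B (Dq s)) : ℂ).re + (inner ℂ (Dq s) (v s) : ℂ).re) with hE'def
  set W' : ℝ → ℝ := fun s =>
    (inner ℂ (α (u s)) (G (Dq s)) : ℂ).re + (inner ℂ (Dp s) (w s) : ℂ).re with hW'def
  set F' : ℝ → ℝ := fun s => E' s - ε * (2 * W' s) with hF'def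
  have hE : ∀ s, 0 ≤ s → HasDerivWithinAt E (E' s) (Set.Ici 0) s := by
    intro s hs
    exact (stmt18_reInner _ _ _ _ _ _ (hp s hs) (hu' s hs)).add
      (stmt18_reInner _ _ _ _ _ _ (hq s hs) (hv' s hs))
  have hW : ∀ s, 0 ≤ s → HasDerivWithinAt W (W' s) (Set.Ici 0) s := by
    intro s hs
    have := stmt18_reInner _ _ _ _ _ _ (hp s hs) (hw' s hs)
    rw [hWdef, hW'def]
    have hcomm : (inner ℂ (α (u s)) (G (Dq s)) : ℂ).re + (inner ℂ (Dp s) (w s) : ℂ).re =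
        (inner ℂ (α (u s)) (G (Dq s)) : ℂ).re + (inner ℂ (Dp s) (w s) : ℂ).re := rfl
    exact this
  have hF : ∀ s, 0 ≤ s → HasDerivWithinAt F (F' s) (Set.Ici 0) s := by
    intro s hs
    exact (hE s hs).sub (((hW s hs).const_mul 2).const_mul ε)
  -- comparability of F with the squared norms
  have hWabs : ∀ s, |W s| ≤ ‖α‖ * K * (‖u s‖ * ‖v s‖) := by
    intro s
    have h1 : |W s| ≤ ‖α (u s)‖ * ‖w s‖ := stmt18_re_le _ _
    have h3 : ‖α (u s)‖ * ‖w s‖ ≤ (‖α‖ * ‖u s‖) * (K * ‖v s‖) :=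
      mul_le_mul (α.le_opNorm _) (hwnorm s) (norm_nonneg _)
        (by positivity)
    calc |W s| ≤ ‖α (u s)‖ * ‖w s‖ := h1
      _ ≤ (‖α‖ * ‖u s‖) * (K * ‖v s‖) := h3
      _ = ‖α‖ * K * (‖u s‖ * ‖v s‖) := by ring
  have hElb : ∀ s, c * (‖u s‖ ^ 2 + ‖v s‖ ^ 2) ≤ E s := by
    intro s
    have := hαc (u s); have := hβc (v s)
    rw [hEdef]; simp only; linarith
  have hEub : ∀ s, E s ≤ (‖α‖ + ‖β‖) * (‖u s‖ ^ 2 + ‖v s‖ ^ 2) := by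
    intro s
    have h1 : (inner ℂ (α (u s)) (u s) : ℂ).re ≤ ‖α‖ * ‖u s‖ ^ 2 := by
      have ha := stmt18_re_le (α (u s)) (u s)
      have hb := mul_le_mul_of_nonneg_right (α.le_opNorm (u s)) (norm_nonneg (u s))
      have := abs_le.mp ha
      nlinarith
    have h2 : (inner ℂ (β (v s)) (v s) : ℂ).re ≤ ‖β‖ * ‖v s‖ ^ 2 := by
      have ha := stmt18_re_le (β (v s)) (v s)
      have hb := mul_le_mul_of_nonneg_right (β.le_opNorm (v s)) (norm_nonneg (v s))
      have := abs_le.mp ha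
      nlinarith
    rw [hEdef]; simp only
    nlinarith [norm_nonneg α, norm_nonneg β, sq_nonneg ‖u s‖, sq_nonneg ‖v s‖]
  have hab : ∀ s, c * (‖u s‖ * ‖v s‖) ≤ c / 2 * (‖u s‖ ^ 2 + ‖v s‖ ^ 2) := by
    intro s
    nlinarith [mul_nonneg hc.le (sq_nonneg (‖u s‖ - ‖v s‖))]
  have hm2 : ∀ s, ε * (2 * (‖α‖ * K * (‖u s‖ * ‖v s‖))) ≤ c * (‖u s‖ * ‖v s‖) := by
    intro s
    have h := mul_le_mul_of_nonneg_right hε2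
      (mul_nonneg (norm_nonneg (u s)) (norm_nonneg (v s)))
    nlinarith [h]
  have hεWub : ∀ s, ε * (2 * W s) ≤ c / 2 * (‖u s‖ ^ 2 + ‖v s‖ ^ 2) := by
    intro s
    have h3 := (abs_le.mp (hWabs s)).2
    have m1 : ε * (2 * W s) ≤ ε * (2 * (‖α‖ * K * (‖u s‖ * ‖v s‖))) :=
      mul_le_mul_of_nonneg_left (by linarith) hε0.le
    linarith [hm2 s, hab s]
  have hεWlb : ∀ s, -(c / 2 * (‖u s‖ ^ 2 + ‖v s‖ ^ 2)) ≤ ε * (2 * W s) := by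
    intro s
    have h3 := (abs_le.mp (hWabs s)).1
    have m1 : ε * (2 * (-(‖α‖ * K * (‖u s‖ * ‖v s‖)))) ≤ ε * (2 * W s) :=
      mul_le_mul_of_nonneg_left (by linarith) hε0.le
    have : -(ε * (2 * (‖α‖ * K * (‖u s‖ * ‖v s‖)))) = ε * (2 * (-(‖α‖ * K * (‖u s‖ * ‖v s‖)))) := by
      ring
    linarith [hm2 s, hab s]
  have hFs : ∀ s, F s = E s - ε * (2 * W s) := fun s => by rw [hFdef]
  have hFlb : ∀ s, c / 2 * (‖u s‖ ^ 2 + ‖v s‖ ^ 2) ≤ F s := by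
    intro s
    rw [hFs s]
    calc c / 2 * (‖u s‖ ^ 2 + ‖v s‖ ^ 2)
        = c * (‖u s‖ ^ 2 + ‖v s‖ ^ 2) - c / 2 * (‖u s‖ ^ 2 + ‖v s‖ ^ 2) := by ring
      _ ≤ E s - ε * (2 * W s) := sub_le_sub (hElb s) (hεWub s)
  have hFub : ∀ s, F s ≤ L * (‖u s‖ ^ 2 + ‖v s‖ ^ 2) := by
    intro s
    rw [hFs s]
    calc E s - ε * (2 * W s)
        ≤ (‖α‖ + ‖β‖) * (‖u s‖ ^ 2 + ‖v s‖ ^ 2) - -(c / 2 * (‖u s‖ ^ 2 + ‖v s‖ ^ 2)) :=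
          sub_le_sub (hEub s) (hεWlb s)
      _ = L * (‖u s‖ ^ 2 + ‖v s‖ ^ 2) := by rw [hLdef]; ring
  -- the key differential inequality
  have hbound : ∀ s, 0 ≤ s → F' s ≤ -k * F s := by
    intro s hs
    have hid1 : (inner ℂ (α (u s)) (A (Dp s)) : ℂ).re = (inner ℂ (Dp s) (u s) : ℂ).re := by
      calc (inner ℂ (α (u s)) (A (Dp s)) : ℂ).re
          = (inner ℂ (u s) (α (A (Dp s))) : ℂ).re := by rw [hαsym]
        _ = (inner ℂ (u s) (Dp s) : ℂ).re := by rw [hαA]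
        _ = (inner ℂ (Dp s) (u s) : ℂ).re := stmt18_re_symm _ _
    have hid2 : (inner ℂ (β (v s)) (B (Dq s)) : ℂ).re = (inner ℂ (Dq s) (v s) : ℂ).re := by
      calc (inner ℂ (β (v s)) (B (Dq s)) : ℂ).re
          = (inner ℂ (v s) (β (B (Dq s))) : ℂ).re := by rw [hβsym]
        _ = (inner ℂ (v s) (Dq s) : ℂ).re := by rw [hβB]
        _ = (inner ℂ (Dq s) (v s) : ℂ).re := stmt18_re_symm _ _
    have hadj1 : (inner ℂ (C.adjoint ⟨v s, h₂ s hs⟩ : H₀) (u s) : ℂ)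
        = inner ℂ (v s) (C ⟨u s, h₁ s hs⟩) :=
      hadj ⟨v s, h₂ s hs⟩ ⟨u s, h₁ s hs⟩
    obtain ⟨hwdom, hCw⟩ := stmt18_graph_fact C (hwgraph s hs)
    have hadj2 : (inner ℂ (C.adjoint ⟨v s, h₂ s hs⟩ : H₀) (w s) : ℂ) = inner ℂ (v s) (β (v s)) := by
      have h := hadj ⟨v s, h₂ s hs⟩ ⟨w s, hwdom⟩
      rwa [hCw] at h
    have hE's : E' s = -(2 * (inner ℂ (γ (u s)) (u s) : ℂ).re) := by
      rw [hE'def]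
      simp only
      rw [hid1, hid2, hDps s hs, hDqs s hs]
      simp only [inner_add_left, inner_neg_left, Complex.add_re, Complex.neg_re]
      rw [hadj1, stmt18_re_symm (v s) (C ⟨u s, h₁ s hs⟩)]
      ring
    have hW's : W' s = (inner ℂ (α (u s)) (G (Dq s)) : ℂ).re - (inner ℂ (γ (u s)) (w s) : ℂ).re
        + (inner ℂ (β (v s)) (v s) : ℂ).re := by
      rw [hW'def]
      simp only
      rw [hDps s hs]
      simp only [inner_add_left, inner_neg_left, Complex.add_re, Complex.neg_re]
      rw [hadj2, stmt18_re_symm (v s) (β (v s))]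
      ring
    have hb1 : -((inner ℂ (α (u s)) (G (Dq s)) : ℂ).re) ≤ ‖α‖ * (‖u s‖ * ‖u s‖) := by
      have h := (abs_le.mp (stmt18_re_le (α (u s)) (G (Dq s)))).1
      have h2 : ‖α (u s)‖ * ‖G (Dq s)‖ ≤ (‖α‖ * ‖u s‖) * ‖u s‖ :=
        mul_le_mul (α.le_opNorm (u s)) (hw'norm s hs) (norm_nonneg _) (by positivity)
      have h3 : (‖α‖ * ‖u s‖) * ‖u s‖ = ‖α‖ * (‖u s‖ * ‖u s‖) := mul_assoc _ _ _
      exact stmt18_negle h (h2.trans_eq h3)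
    have hb2 : (inner ℂ (γ (u s)) (w s) : ℂ).re ≤ ‖γ‖ * K * (‖u s‖ * ‖v s‖) := by
      have h := (abs_le.mp (stmt18_re_le (γ (u s)) (w s))).2
      have h2 : ‖γ (u s)‖ * ‖w s‖ ≤ (‖γ‖ * ‖u s‖) * (K * ‖v s‖) :=
        mul_le_mul (γ.le_opNorm (u s)) (hwnorm s) (norm_nonneg _) (by positivity)
      have h3 : (‖γ‖ * ‖u s‖) * (K * ‖v s‖) = ‖γ‖ * K * (‖u s‖ * ‖v s‖) := by ring
      exact h.trans (h2.trans_eq h3)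
    have hb3 : c * ‖v s‖ ^ 2 ≤ (inner ℂ (β (v s)) (v s) : ℂ).re := hβc (v s)
    have hb4 : c * ‖u s‖ ^ 2 ≤ (inner ℂ (γ (u s)) (u s) : ℂ).re := hγ (u s)
    have hAM : 2 * (‖γ‖ * K) * (‖u s‖ * ‖v s‖) ≤ g2 * ‖u s‖ ^ 2 + c * ‖v s‖ ^ 2 := by
      have hsq := sq_nonneg (‖γ‖ * K * ‖u s‖ - c * ‖v s‖)
      have hmul : c * (2 * (‖γ‖ * K) * (‖u s‖ * ‖v s‖)) ≤ c * (g2 * ‖u s‖ ^ 2 + c * ‖v s‖ ^ 2) := by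
        rw [← sub_nonneg]
        have hexp : c * (g2 * ‖u s‖ ^ 2 + c * ‖v s‖ ^ 2) -
            c * (2 * (‖γ‖ * K) * (‖u s‖ * ‖v s‖)) = (‖γ‖ * K * ‖u s‖ - c * ‖v s‖) ^ 2 := by
          rw [show c * (g2 * ‖u s‖ ^ 2 + c * ‖v s‖ ^ 2) = g2 * c * ‖u s‖ ^ 2 + c ^ 2 * ‖v s‖ ^ 2
            from by ring, hgc]
          ring
        rw [hexp]
        exact hsq
      exact (mul_le_mul_iff_right₀ hc).mp hmul
    have key : F' s ≤ -(ε * c) * (‖u s‖ ^ 2 + ‖v s‖ ^ 2) := by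
      rw [hF'def]
      simp only
      rw [hE's, hW's]
      exact stmt18_key_arith ε c ‖α‖ g2 (‖γ‖ * K) ‖u s‖ ‖v s‖ _ _ _ _
        hε0.le hb1 hb2 hb3 hb4 hAM hε1 hεc
    exact stmt18_fin_arith k L (‖u s‖ ^ 2 + ‖v s‖ ^ 2) (F' s) (F s) (ε * c)
      hk0.le hkL key (hFub s)
  -- Gronwall
  have hgr := stmt18_gronwall F F' k hF hbound t ht
  -- endgame
  have hUt1 : ‖(U t).1‖ = ‖u t‖ := rfl
  have hUt2' : ‖(U t).2‖ = ‖v t‖ := rfl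
  have hUt2 : ‖U t‖ ^ 2 ≤ ‖u t‖ ^ 2 + ‖v t‖ ^ 2 := by
    rw [Prod.norm_def, hUt1, hUt2']
    rcases le_total (‖u t‖) (‖v t‖) with hle | hle
    · rw [max_eq_right hle]; exact le_add_of_nonneg_left (sq_nonneg _)
    · rw [max_eq_left hle]; exact le_add_of_nonneg_right (sq_nonneg _)
  have hU02 : ‖u 0‖ ^ 2 + ‖v 0‖ ^ 2 ≤ 2 * ‖U 0‖ ^ 2 := by
    have h1 : ‖u 0‖ ≤ ‖U 0‖ := by
      rw [Prod.norm_def]; exact le_max_left _ _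
    have h2 : ‖v 0‖ ≤ ‖U 0‖ := by
      rw [Prod.norm_def]; exact le_max_right _ _
    exact (add_le_add (pow_le_pow_left₀ (norm_nonneg (u 0)) h1 2)
      (pow_le_pow_left₀ (norm_nonneg (v 0)) h2 2)).trans_eq (two_mul _).symm
  have chain : ‖U t‖ ^ 2 ≤ 4 * L / c * Real.exp (-k * t) * ‖U 0‖ ^ 2 := by
    have h1 : c / 2 * (‖u t‖ ^ 2 + ‖v t‖ ^ 2) ≤ F t := hFlb t
    have h3 : F 0 ≤ L * (‖u 0‖ ^ 2 + ‖v 0‖ ^ 2) := hFub 0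
    have h4 : F 0 * Real.exp (-k * t) ≤ L * (2 * ‖U 0‖ ^ 2) * Real.exp (-k * t) := by
      refine mul_le_mul_of_nonneg_right ?_ (Real.exp_pos _).le
      calc F 0 ≤ L * (‖u 0‖ ^ 2 + ‖v 0‖ ^ 2) := h3
        _ ≤ L * (2 * ‖U 0‖ ^ 2) := mul_le_mul_of_nonneg_left hU02 hL0.le
    have h5 : c / 2 * ‖U t‖ ^ 2 ≤ c / 2 * (‖u t‖ ^ 2 + ‖v t‖ ^ 2) :=
      mul_le_mul_of_nonneg_left hUt2 (by positivity)
    have h6 : c / 2 * ‖U t‖ ^ 2 ≤ L * (2 * ‖U 0‖ ^ 2) * Real.exp (-k * t) :=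
      h5.trans (h1.trans (hgr.trans h4))
    have h7 : ‖U t‖ ^ 2 ≤ L * (2 * ‖U 0‖ ^ 2) * Real.exp (-k * t) / (c / 2) := by
      rw [le_div_iff₀ (show (0 : ℝ) < c / 2 by positivity), mul_comm]
      exact h6
    refine h7.trans_eq ?_
    field_simp
    ring
  have hM1 : Real.sqrt (4 * L / c) ≤ max 1 (Real.sqrt (4 * L / c)) := le_max_right _ _
  have hs1 : ‖U t‖ ≤ Real.sqrt (4 * L / c * Real.exp (-k * t) * ‖U 0‖ ^ 2) := by
    rw [← Real.sqrt_sq (norm_nonneg (U t))]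
    exact Real.sqrt_le_sqrt chain
  have hs2 : Real.sqrt (4 * L / c * Real.exp (-k * t) * ‖U 0‖ ^ 2)
      = Real.sqrt (4 * L / c) * Real.exp (-(k / 2) * t) * ‖U 0‖ := by
    rw [Real.sqrt_mul (by positivity), Real.sqrt_mul (by positivity),
      Real.sqrt_sq (norm_nonneg _), ← Real.exp_half]
    have : -k * t / 2 = -(k / 2) * t := by ring
    rw [this]
  rw [hs2] at hs1
  calc ‖U t‖ ≤ Real.sqrt (4 * L / c) * Real.exp (-(k / 2) * t) * ‖U 0‖ := hs1
    _ ≤ max 1 (Real.sqrt (4 * L / c)) * Real.exp (-(k / 2) * t) * ‖U 0‖ := by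
      refine mul_le_mul_of_nonneg_right (mul_le_mul_of_nonneg_right hM1 (Real.exp_pos _).le)
        (norm_nonneg _)
end

section
/- Let H₀, H₁ be Hilbert spaces, γ ∈ L(H₀) with Re γ ≥ c > 0, C : dom(C) ⊆ H₀ → H₁ densely defined, closed, injective and surjective. Then the operator B₀ := [[γ, -C*],[C, 0]] with domain dom(C) × dom(C*) is continuously invertible (i.e., 0 belongs to the resolvent set of -B₀), with inverse the bounded operator [[0, C⁻¹],[-(C*)⁻¹, (C*)⁻¹ γ C⁻¹]]. -/
open scoped ComplexInnerProductSpace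

/-- for `Re γ ≥ c > 0` and `C` densely defined, closed, injective and
surjective (hence with bounded inverse `Cinv`), the operator
`B₀ = [[γ, -C*],[C, 0]] : (u,v) ↦ (γu - C*v, Cu)` on `dom C × dom C*` is continuously
invertible, with inverse the bounded block operator `[[0, C⁻¹],[-(C*)⁻¹, (C*)⁻¹ γ C⁻¹]]`:
`(f,g) ↦ (C⁻¹ g, -(C*)⁻¹ f + (C*)⁻¹ γ C⁻¹ g)` (where `(C*)⁻¹` is the bounded inverse of
`C*`, which inherits bijectivity from `C`). -/
theorem stmt19 {H₀ H₁ : Type*} [NormedAddCommGroup H₀] [InnerProductSpace ℂ H₀] [CompleteSpace H₀]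
    [NormedAddCommGroup H₁] [InnerProductSpace ℂ H₁] [CompleteSpace H₁]
    (γ : H₀ →L[ℂ] H₀) (c : ℝ) (hc : 0 < c)
    (hγ : ∀ x : H₀, c * ‖x‖ ^ 2 ≤ (inner ℂ (γ x) x : ℂ).re)
    (C : H₀ →ₗ.[ℂ] H₁) (hdense : Dense (C.domain : Set H₀)) (hclosed : C.IsClosed)
    (hinj : ∀ u : C.domain, C u = 0 → (u : H₀) = 0)
    (Cinv : H₁ →L[ℂ] H₀)
    (hCinv₁ : ∀ u : C.domain, Cinv (C u) = ↑u)
    (hCinv₂ : ∀ g : H₁, ∃ h : Cinv g ∈ C.domain, C ⟨Cinv g, h⟩ = g) :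
    -- (C*)⁻¹ exists as a bounded operator ...
    ∃ Dinv : H₀ →L[ℂ] H₁,
      (∀ v : C.adjoint.domain, Dinv (C.adjoint v) = ↑v) ∧
      (∀ w : H₀, ∃ h : Dinv w ∈ C.adjoint.domain, C.adjoint ⟨Dinv w, h⟩ = w) ∧
      -- ... B₀ is injective ...
      (∀ (u : C.domain) (v : C.adjoint.domain),
        γ ↑u - C.adjoint v = 0 → C u = 0 → (↑u : H₀) = 0 ∧ (↑v : H₁) = 0) ∧
      -- ... and `[[0, C⁻¹],[-(C*)⁻¹, (C*)⁻¹ γ C⁻¹]]` is a (bounded) right inverse of B₀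
      ∀ (f : H₀) (g : H₁),
        ∃ (hu : Cinv g ∈ C.domain)
          (hv : -Dinv f + Dinv (γ (Cinv g)) ∈ C.adjoint.domain),
          γ (Cinv g) - C.adjoint ⟨-Dinv f + Dinv (γ (Cinv g)), hv⟩ = f ∧
          C ⟨Cinv g, hu⟩ = g := by
  refine ⟨ContinuousLinearMap.adjoint Cinv, ?_, ?_, ?_, ?_⟩
  · -- left inverse of C*
    intro v
    apply ext_inner_right ℂ
    intro y
    obtain ⟨hy, hCy⟩ := hCinv₂ y
    rw [ContinuousLinearMap.adjoint_inner_left]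
    calc ⟪(C.adjoint v : H₀), Cinv y⟫
        = ⟪(C.adjoint v : H₀), ((⟨Cinv y, hy⟩ : C.domain) : H₀)⟫ := rfl
      _ = ⟪(v : H₁), C ⟨Cinv y, hy⟩⟫ := C.adjoint_isFormalAdjoint hdense v ⟨Cinv y, hy⟩
      _ = ⟪(v : H₁), y⟫ := by rw [hCy]
  · -- right inverse of C*
    intro w
    have hkey : ∀ x : C.domain, ⟪w, (x : H₀)⟫ = ⟪ContinuousLinearMap.adjoint Cinv w, C x⟫ := by
      intro x
      rw [ContinuousLinearMap.adjoint_inner_left, hCinv₁]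
    have hmem : ContinuousLinearMap.adjoint Cinv w ∈ C.adjoint.domain :=
      C.mem_adjoint_domain_of_exists _ ⟨w, hkey⟩
    exact ⟨hmem, LinearPMap.adjoint_apply_eq hdense ⟨_, hmem⟩ hkey⟩
  · -- injectivity
    intro u v h1 h2
    have hu0 : (u : H₀) = 0 := hinj u h2
    have hCv : C.adjoint v = 0 := by
      rw [sub_eq_zero] at h1; rw [← h1, hu0, map_zero]
    refine ⟨hu0, ?_⟩
    have : ContinuousLinearMap.adjoint Cinv (C.adjoint v) = (v : H₁) := by
      apply ext_inner_right ℂ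
      intro y
      obtain ⟨hy, hCy⟩ := hCinv₂ y
      rw [ContinuousLinearMap.adjoint_inner_left]
      calc ⟪(C.adjoint v : H₀), Cinv y⟫
          = ⟪(C.adjoint v : H₀), ((⟨Cinv y, hy⟩ : C.domain) : H₀)⟫ := rfl
        _ = ⟪(v : H₁), C ⟨Cinv y, hy⟩⟫ := C.adjoint_isFormalAdjoint hdense v ⟨Cinv y, hy⟩
        _ = ⟪(v : H₁), y⟫ := by rw [hCy]
    rw [← this, hCv, map_zero]
  · -- right inverse of B₀
    intro f g
    obtain ⟨hu, hCu⟩ := hCinv₂ g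
    set D := ContinuousLinearMap.adjoint Cinv with hD
    set w : H₀ := -f + γ (Cinv g) with hw
    have heq : -D f + D (γ (Cinv g)) = D w := by
      rw [hw, map_add, map_neg]
    have hkey : ∀ x : C.domain, ⟪w, (x : H₀)⟫ = ⟪D w, C x⟫ := by
      intro x
      rw [hD, ContinuousLinearMap.adjoint_inner_left, hCinv₁]
    have hmem : D w ∈ C.adjoint.domain := C.mem_adjoint_domain_of_exists _ ⟨w, hkey⟩
    have hmem' : -D f + D (γ (Cinv g)) ∈ C.adjoint.domain := heq ▸ hmem
    refine ⟨hu, hmem', ?_, hCu⟩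
    have hval : C.adjoint ⟨D w, hmem⟩ = w := LinearPMap.adjoint_apply_eq hdense ⟨_, hmem⟩ hkey
    have : (⟨-D f + D (γ (Cinv g)), hmem'⟩ : C.adjoint.domain) = ⟨D w, hmem⟩ :=
      Subtype.ext heq
    rw [this, hval, hw]
    abel
end
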